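/- arXiv:2512.16759 — 3 statements merged into one kernel-verified Lean document; each statement's English description precedes it below -/
import Mathlib

section
/- Let Θ₀¹,…,Θ₀ᴷ be null hypotheses with Θ₀ = ∪_j Θ₀ʲ, and (E₁,…,E_K) a compound e-variable, i.e., ∑_{k : θ∈Θ₀ᵏ} E_θ[E_k] ≤ K for all θ ∈ Θ₀. For each j let S_j be sufficient for Θ₀ʲ ∪ Θ₁ and G_j := E[E_j | S_j]. Then (G₁,…,G_K) is again a compound e-variable, and for any concave utility f and θ ∈ Θ₁ ∪ Θ₀ʲ, E_θ[f(G_j)] ≥ E_θ[f(E_j)] when both sides are defined. -/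
open MeasureTheory ENNReal Filter Set
open scoped Classical
noncomputable section

/-- The positive part of an extended real, as an extended nonnegative real. -/
def erealPos (a : EReal) : ℝ≥0∞ := if a = ⊤ then ⊤ else ENNReal.ofReal a.toReal

/-- Generalized expectation `E[f] = E[f⁺] - E[f⁻]`, valued in the extended reals. -/
def eexp {Ω : Type*} {mΩ : MeasurableSpace Ω} (μ : Measure Ω) (f : Ω → EReal) : EReal :=
  ((∫⁻ ω, erealPos (f ω) ∂μ : ℝ≥0∞) : EReal) - ((∫⁻ ω, erealPos (-(f ω)) ∂μ : ℝ≥0∞) : EReal)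

/-- The expectation of an extended-real random variable is (well-)defined when at least one of
the expectations of its positive and negative parts is finite. -/
def ExpDefined {Ω : Type*} {mΩ : MeasurableSpace Ω} (μ : Measure Ω) (f : Ω → EReal) : Prop :=
  (∫⁻ ω, erealPos (f ω) ∂μ) < ⊤ ∨ (∫⁻ ω, erealPos (-(f ω)) ∂μ) < ⊤

/-- Logarithm on `[0,∞]`, with `log 0 = -∞` and `log ∞ = ∞`. -/
def elog (x : ℝ≥0∞) : EReal := if x = 0 then ⊥ else if x = ⊤ then ⊤ else ((Real.log x.toReal : ℝ) : EReal)

/-- Ratio on `[0,∞]` with the conventions `0/0 = 0` and `∞/∞ = 1`. -/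
def eratio (a b : ℝ≥0∞) : ℝ≥0∞ := if a = ⊤ ∧ b = ⊤ then 1 else a / b

/-- `g` is a version of the conditional expectation of the nonnegative `h` given the
sub-σ-field `m`, under the measure `μ`. -/
def IsCondExpNN {Ω : Type*} {mΩ : MeasurableSpace Ω} (m : MeasurableSpace Ω)
    (μ : @Measure Ω mΩ) (h g : Ω → ℝ≥0∞) : Prop :=
  Measurable[m] g ∧ ∀ A : Set Ω, MeasurableSet[m] A → ∫⁻ ω in A, g ω ∂μ = ∫⁻ ω in A, h ω ∂μ

/-- `g` is a universal (θ-free) version of the conditional expectation of `h` given `m`,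
simultaneously under all measures `P θ`, `θ` ranging over a set `T` of parameters. -/
def IsUnivCondExpNN {Ω Θ : Type*} {mΩ : MeasurableSpace Ω} (m : MeasurableSpace Ω)
    (P : Θ → @Measure Ω mΩ) (T : Set Θ) (h g : Ω → ℝ≥0∞) : Prop :=
  Measurable[m] g ∧ ∀ θ ∈ T, IsCondExpNN m (P θ) h g

/-- A sub-σ-field `m` is sufficient for the family `P` over the parameter set `T`:
every nonnegative measurable function admits a universal conditional expectation given `m`. -/
def IsSufficient {Ω Θ : Type*} {mΩ : MeasurableSpace Ω} (m : MeasurableSpace Ω)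
    (P : Θ → @Measure Ω mΩ) (T : Set Θ) : Prop :=
  m ≤ mΩ ∧ ∀ h : Ω → ℝ≥0∞, Measurable[mΩ] h → ∃ g, IsUnivCondExpNN m P T h g

/-- Kullback–Leibler divergence, valued in `[0,∞]` (as an extended real):
`∫ log(dμ/dν) dμ` when `μ ≪ ν`, and `+∞` otherwise. -/
def klDiv' {Ω : Type*} {mΩ : MeasurableSpace Ω} (μ ν : Measure Ω) : EReal :=
  if μ ≪ ν then eexp μ (fun ω => elog (μ.rnDeriv ν ω)) else ⊤

/-- `F : [0,∞] → [-∞,∞]` is the extension by limits of a concave utility `f : (0,∞) → ℝ`,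
i.e. `F 0 = lim_{x↓0} f x`, `F ∞ = lim_{x→∞} f x`, and `F = f` in between. -/
def IsConcaveExtension (f : ℝ → ℝ) (F : ℝ≥0∞ → EReal) : Prop :=
  ConcaveOn ℝ (Set.Ioi 0) f ∧
  (∀ x : ℝ≥0∞, x ≠ 0 → x ≠ ⊤ → F x = ((f x.toReal : ℝ) : EReal)) ∧
  Tendsto (fun x : ℝ => ((f x : ℝ) : EReal)) (nhdsWithin 0 (Set.Ioi 0)) (nhds (F 0)) ∧
  Tendsto (fun x : ℝ => ((f x : ℝ) : EReal)) atTop (nhds (F ⊤))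

section RBhelpers

@[simp] lemma erealPos_bot : erealPos ⊥ = 0 := by simp [erealPos]
@[simp] lemma erealPos_top : erealPos ⊤ = ⊤ := by simp [erealPos]
@[simp] lemma erealPos_coe (r : ℝ) : erealPos (r : EReal) = ENNReal.ofReal r := by
  simp [erealPos]
@[simp] lemma erealPos_neg_coe (r : ℝ) : erealPos (-(r : EReal)) = ENNReal.ofReal (-r) := by
  rw [← EReal.coe_neg]; simp [erealPos]
@[simp] lemma erealPos_neg_top : erealPos (-(⊤ : EReal)) = 0 := by
  simp [erealPos]
@[simp] lemma erealPos_neg_bot : erealPos (-(⊥ : EReal)) = ⊤ := by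
  simp [erealPos]

lemma measurable_erealPos : Measurable erealPos := by
  unfold erealPos
  apply Measurable.ite
  · exact (measurableSet_singleton (⊤ : EReal)).congr (by ext x; simp)
  · exact measurable_const
  · exact ENNReal.measurable_ofReal.comp measurable_ereal_toReal

lemma ofReal_eq_ofReal_max (x : ℝ) : ENNReal.ofReal x = ENNReal.ofReal (max x 0) := by
  rcases le_total x 0 with h | h
  · rw [ENNReal.ofReal_eq_zero.mpr h, max_eq_right h, ENNReal.ofReal_zero]
  · rw [max_eq_left h]

lemma erealPos_mono : Monotone erealPos := by
  intro x y hxy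
  induction x using EReal.rec with
  | bot => simp
  | top => rw [top_le_iff.mp hxy]
  | coe a =>
    induction y using EReal.rec with
    | bot => exact absurd (hxy.trans_lt (EReal.bot_lt_coe a)) (lt_irrefl _)
    | top => simp
    | coe b => simpa using ENNReal.ofReal_le_ofReal (EReal.coe_le_coe_iff.mp hxy)

/-- key pointwise positive/negative part inequality -/
lemma erealPos_add_le {x y : EReal} (h : x ≤ y) :
    erealPos x + erealPos (-y) ≤ erealPos y + erealPos (-x) := by
  induction x using EReal.rec with
  | bot => simp
  | top => rw [top_le_iff.mp h]
  | coe a =>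
    induction y using EReal.rec with
    | bot => exact absurd (h.trans_lt (EReal.bot_lt_coe a)) (lt_irrefl _)
    | top => simp
    | coe b =>
      have hab : a ≤ b := EReal.coe_le_coe_iff.mp h
      simp only [erealPos_coe, erealPos_neg_coe]
      rw [ofReal_eq_ofReal_max a, ofReal_eq_ofReal_max (-b), ofReal_eq_ofReal_max b,
        ofReal_eq_ofReal_max (-a), ← ENNReal.ofReal_add (le_max_right _ _) (le_max_right _ _),
        ← ENNReal.ofReal_add (le_max_right _ _) (le_max_right _ _)]
      apply ENNReal.ofReal_le_ofReal
      rcases le_total a 0 with ha | ha <;> rcases le_total b 0 with hb | hb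
      · rw [max_eq_right ha, max_eq_left (neg_nonneg.mpr hb), max_eq_right hb,
          max_eq_left (neg_nonneg.mpr ha)]; linarith
      · rw [max_eq_right ha, max_eq_right (neg_nonpos.mpr hb), max_eq_left hb,
          max_eq_left (neg_nonneg.mpr ha)]; linarith
      · rw [max_eq_left ha, max_eq_left (neg_nonneg.mpr hb), max_eq_right hb,
          max_eq_right (neg_nonpos.mpr ha)]; linarith
      · rw [max_eq_left ha, max_eq_right (neg_nonpos.mpr hb), max_eq_left hb,
          max_eq_right (neg_nonpos.mpr ha)]; linarith

/-- comparison of EReal differences of ENNReals from an additive inequality -/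
lemma ereal_sub_le_sub {x1 x2 y1 y2 : ℝ≥0∞} (h : x1 + y2 ≤ y1 + x2)
    (_h1 : x1 ≠ ⊤ ∨ x2 ≠ ⊤) (h2 : y1 ≠ ⊤ ∨ y2 ≠ ⊤) :
    (x1 : EReal) - (x2 : EReal) ≤ (y1 : EReal) - (y2 : EReal) := by
  by_cases hx2 : x2 = ⊤
  · rw [hx2, EReal.coe_ennreal_top, EReal.sub_top]; exact bot_le
  by_cases hy1 : y1 = ⊤
  · have hy2 : y2 ≠ ⊤ := h2.resolve_left (by simp [hy1])
    rw [hy1]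
    rw [EReal.coe_ennreal_top]
    rw [show (⊤:EReal) - (y2:EReal) = ⊤ from ?_]
    · exact le_top
    · induction y2 using ENNReal.recTopCoe with
      | top => exact absurd rfl hy2
      | coe r => rw [show ((r:ℝ≥0∞) : EReal) = ((r:ℝ) : EReal) by rfl]; exact EReal.top_sub_coe r
  by_cases hx1 : x1 = ⊤
  · exfalso
    rw [hx1, top_add] at h
    exact hy1 (by
      rcases ENNReal.add_eq_top.mp (top_le_iff.mp h) with h' | h'
      · exact h'
      · exact absurd h' hx2)
  · have hy2 : y2 ≠ ⊤ := by
      intro hy2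
      rw [hy2, add_top] at h
      rcases ENNReal.add_eq_top.mp (top_le_iff.mp h) with h' | h'
      · exact hy1 h'
      · exact hx2 h'
    have hco : ∀ z : ℝ≥0∞, z ≠ ⊤ → (z : EReal) = ((z.toReal : ℝ) : EReal) := by
      intro z hz
      rw [← EReal.toReal_coe_ennreal (x := z)]
      rw [EReal.coe_toReal (by simpa using hz) (EReal.coe_ennreal_ne_bot z)]
    rw [hco x1 hx1, hco x2 hx2, hco y1 hy1, hco y2 hy2, ← EReal.coe_sub, ← EReal.coe_sub,
      EReal.coe_le_coe_iff]
    have := ENNReal.toReal_mono (by simp [ENNReal.add_eq_top, hy1, hx2]) h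
    rw [ENNReal.toReal_add hx1 hy2, ENNReal.toReal_add hy1 hx2] at this
    linarith

lemma add_erealPos_le {p n : ℝ≥0∞} {D : EReal} (hn : n ≠ ⊤) (h : (p : EReal) - (n : EReal) ≤ D) :
    p + erealPos (-D) ≤ erealPos D + n := by
  induction D using EReal.rec with
  | top => simp [add_comm, le_top]
  | bot =>
    exfalso
    have hne : (p : EReal) - (n : EReal) ≠ ⊥ := by
      rw [sub_eq_add_neg]
      intro hb
      rcases EReal.add_eq_bot_iff.mp hb with h' | h'
      · exact EReal.coe_ennreal_ne_bot p h'
      · exact hn (by simpa using EReal.neg_eq_bot_iff.mp h')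
    exact hne (le_bot_iff.mp h)
  | coe d =>
    by_cases hp : p = ⊤
    · exfalso
      rw [hp, EReal.coe_ennreal_top] at h
      rw [show ((n:ℝ≥0∞):EReal) = ((n.toReal:ℝ):EReal) from ?_] at h
      · rw [EReal.top_sub_coe] at h; exact EReal.coe_ne_top d (top_le_iff.mp h)
      · rw [← EReal.toReal_coe_ennreal (x := n),
          EReal.coe_toReal (by simpa using hn) (EReal.coe_ennreal_ne_bot n)]
    · have hco : ∀ z : ℝ≥0∞, z ≠ ⊤ → (z : EReal) = ((z.toReal : ℝ) : EReal) := by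
        intro z hz
        rw [← EReal.toReal_coe_ennreal (x := z),
          EReal.coe_toReal (by simpa using hz) (EReal.coe_ennreal_ne_bot z)]
      rw [hco p hp, hco n hn, ← EReal.coe_sub, EReal.coe_le_coe_iff] at h
      -- now real arithmetic
      rw [erealPos_coe, erealPos_neg_coe]
      have hp' : p = ENNReal.ofReal p.toReal := by rw [ENNReal.ofReal_toReal hp]
      have hn' : n = ENNReal.ofReal n.toReal := by rw [ENNReal.ofReal_toReal hn]
      rw [hp', hn', ofReal_eq_ofReal_max (-d), ofReal_eq_ofReal_max d,
        ← ENNReal.ofReal_add ENNReal.toReal_nonneg (le_max_right _ _),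
        ← ENNReal.ofReal_add (le_max_right _ _) ENNReal.toReal_nonneg]
      apply ENNReal.ofReal_le_ofReal
      rcases le_total d 0 with hd | hd
      · rw [max_eq_left (neg_nonneg.mpr hd), max_eq_right hd]
        have := ENNReal.toReal_nonneg (a := p); linarith
      · rw [max_eq_right (neg_nonpos.mpr hd), max_eq_left hd]
        have := ENNReal.toReal_nonneg (a := n); linarith

end RBhelpers

section RBhelpers2

/-- affine line on `[0,∞]` with EReal values, with the appropriate conventions at `∞`. -/
def lineE (a b : ℝ) (z : ℝ≥0∞) : EReal :=
  if z = ⊤ then (if 0 < a then ⊤ else if a < 0 then ⊥ else (b : EReal))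
  else ((a * z.toReal + b : ℝ) : EReal)

lemma lineE_ne_top (a b : ℝ) {z : ℝ≥0∞} (hz : z ≠ ⊤) :
    lineE a b z = ((a * z.toReal + b : ℝ) : EReal) := by simp [lineE, hz]

lemma lineE_zero_eq (a b : ℝ) : lineE a b 0 = ((b : ℝ) : EReal) := by
  simp [lineE]

lemma measurable_lineE (a b : ℝ) : Measurable (lineE a b) := by
  unfold lineE
  apply Measurable.ite
  · exact (measurableSet_singleton (⊤ : ℝ≥0∞)).congr (by ext x; simp)
  · exact measurable_const
  · exact Measurable.coe_real_ereal (by fun_prop)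

/-- existence of a supporting line for a concave function at `q > 0`. -/
lemma exists_support_line {f : ℝ → ℝ} (hf : ConcaveOn ℝ (Ioi 0) f) {q : ℝ} (hq : 0 < q) :
    ∃ a b : ℝ, (∀ x, 0 < x → f x ≤ a * x + b) ∧ a * q + b = f q := by
  set S : Set ℝ := (fun x => (f x - f q) / (x - q)) '' Ioi q with hS
  have hSne : S.Nonempty := ⟨_, ⟨q + 1, by simp [hq.le], rfl⟩⟩
  have hub : ∀ x, 0 < x → x < q → ∀ s ∈ S, s ≤ (f q - f x) / (q - x) := by
    rintro x hx hxq s ⟨y, hy, rfl⟩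
    exact hf.slope_anti_adjacent hx (lt_trans hq (mem_Ioi.mp hy)) hxq (mem_Ioi.mp hy)
  have hbdd : BddAbove S := ⟨(f q - f (q/2)) / (q - q/2), fun s hs =>
    hub (q/2) (by linarith) (by linarith) s hs⟩
  set a := sSup S with ha
  refine ⟨a, f q - a * q, ?_, by ring⟩
  intro x hx
  rcases lt_trichotomy x q with hxq | hxq | hxq
  · have h1 : a ≤ (f q - f x) / (q - x) := csSup_le hSne (hub x hx hxq)
    have h2 : a * (q - x) ≤ f q - f x := by
      rw [le_div_iff₀ (by linarith : (0:ℝ) < q - x)] at h1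
      linarith
    nlinarith
  · subst hxq; nlinarith
  · have h1 : (f x - f q) / (x - q) ≤ a := le_csSup hbdd ⟨x, mem_Ioi.mpr hxq, rfl⟩
    have h2 : f x - f q ≤ a * (x - q) := by
      rw [div_le_iff₀ (by linarith : (0:ℝ) < x - q)] at h1; linarith
    nlinarith

/-- the extension `F` is dominated by any affine majorant of `f`. -/
lemma F_le_lineE {f : ℝ → ℝ} {F : ℝ≥0∞ → EReal} (hF : IsConcaveExtension f F)
    {a b : ℝ} (hmaj : ∀ x, 0 < x → f x ≤ a * x + b) :
    ∀ z : ℝ≥0∞, F z ≤ lineE a b z := by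
  intro z
  by_cases hz0 : z = 0
  · subst hz0
    rw [lineE_zero_eq]
    have htend : Tendsto (fun x : ℝ => ((a * x + b : ℝ) : EReal)) (nhdsWithin 0 (Ioi 0))
        (nhds ((b : ℝ) : EReal)) := by
      rw [EReal.tendsto_coe]
      have : Tendsto (fun x : ℝ => a * x + b) (nhds 0) (nhds (a * 0 + b)) := by
        exact (Continuous.tendsto (by continuity) 0)
      rw [show a * 0 + b = b by ring] at this
      exact this.mono_left nhdsWithin_le_nhds
    refine le_of_tendsto_of_tendsto hF.2.2.1 htend ?_
    filter_upwards [self_mem_nhdsWithin] with x hx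
    exact EReal.coe_le_coe_iff.mpr (hmaj x hx)
  by_cases hzt : z = ⊤
  · subst hzt
    rcases lt_trichotomy a 0 with ha | ha | ha
    · have hbot : lineE a b ⊤ = ⊥ := by simp [lineE, ha, not_lt.mpr ha.le]
      rw [hbot]
      have htend : Tendsto (fun x : ℝ => ((a * x + b : ℝ) : EReal)) atTop (nhds ⊥) := by
        rw [EReal.tendsto_nhds_bot_iff_real]
        intro c
        have : Tendsto (fun x : ℝ => a * x + b) atTop atBot :=
          (tendsto_atBot_add_const_right _ b (tendsto_id.const_mul_atTop_of_neg ha))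
        filter_upwards [this.eventually_lt_atBot c] with x hx
        exact_mod_cast EReal.coe_lt_coe_iff.mpr hx
      refine le_of_tendsto_of_tendsto hF.2.2.2 htend ?_
      filter_upwards [eventually_gt_atTop 0] with x hx
      exact EReal.coe_le_coe_iff.mpr (hmaj x hx)
    · subst ha
      have hb : lineE 0 b ⊤ = ((b : ℝ) : EReal) := by simp [lineE]
      rw [hb]
      refine le_of_tendsto hF.2.2.2 ?_
      filter_upwards [eventually_gt_atTop 0] with x hx
      exact EReal.coe_le_coe_iff.mpr (by linarith [hmaj x hx])
    · have : lineE a b ⊤ = ⊤ := by simp [lineE, ha]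
      rw [this]; exact le_top
  · rw [lineE_ne_top a b hzt, hF.2.1 z hz0 hzt]
    exact EReal.coe_le_coe_iff.mpr (hmaj z.toReal (ENNReal.toReal_pos hz0 hzt))

end RBhelpers2

section More
/-- a concave function lies below its finite limit at infinity. -/
lemma f_le_const_of_tendsto {f : ℝ → ℝ} (hf : ConcaveOn ℝ (Ioi 0) f) {L : ℝ}
    (h : Tendsto f atTop (nhds L)) : ∀ x, 0 < x → f x ≤ L := by
  intro x₀ hx₀
  by_contra hlt
  push_neg at hlt
  obtain ⟨y, hy1, hy2⟩ := ((h.eventually (eventually_lt_nhds (by linarith : L < (L + f x₀)/2))).and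
    (eventually_gt_atTop x₀)).exists
  have hyx : x₀ < y := hy2
  have hs : (f y - f x₀) / (y - x₀) < 0 :=
    div_neg_of_neg_of_pos (by linarith) (by linarith)
  set s := (f y - f x₀) / (y - x₀) with hs_def
  have hslope : ∀ t, y < t → f t ≤ f y + s * (t - y) := by
    intro t ht
    have := hf.slope_anti_adjacent (mem_Ioi.mpr hx₀) (mem_Ioi.mpr (by linarith : (0:ℝ) < t))
      hyx ht
    rw [div_le_iff₀ (by linarith : (0:ℝ) < t - y)] at this
    linarith
  have htendbot : Tendsto (fun t : ℝ => f y + s * (t - y)) atTop atBot := by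
    apply tendsto_atBot_add_const_left
    have : Tendsto (fun t : ℝ => t - y) atTop atTop := tendsto_atTop_add_const_right _ _ tendsto_id
    exact this.const_mul_atTop_of_neg hs
  obtain ⟨t, ht1, ht2, ht3⟩ := ((htendbot.eventually_lt_atBot (L - 1)).and
    ((h.eventually (eventually_gt_nhds (by linarith : L - 1 < L))).and
      (eventually_gt_atTop y))).exists
  exact absurd ((hslope t ht3).trans_lt ht1) (not_lt.mpr ht2.le)

/-- if `f → -∞` at `∞`, there is a majorizing line with negative slope. -/
lemma exists_neg_line {f : ℝ → ℝ} (hf : ConcaveOn ℝ (Ioi 0) f)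
    (h : Tendsto (fun x : ℝ => ((f x : ℝ) : EReal)) atTop (nhds ⊥)) :
    ∃ a b : ℝ, (∀ x, 0 < x → f x ≤ a * x + b) ∧ a < 0 := by
  rw [EReal.tendsto_nhds_bot_iff_real] at h
  obtain ⟨y, hy1, hy2⟩ := ((h (f 1)).and (eventually_gt_atTop 1)).exists
  have hfy : f y < f 1 := by exact_mod_cast hy1
  obtain ⟨a, b, hmaj, htouch⟩ := exists_support_line hf (by linarith : (0:ℝ) < y)
  refine ⟨a, b, hmaj, ?_⟩
  have h1 : f 1 ≤ a * 1 + b := hmaj 1 one_pos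
  nlinarith

/-- measurability of the concave extension. -/
lemma measurable_F {f : ℝ → ℝ} {F : ℝ≥0∞ → EReal} (hF : IsConcaveExtension f F) :
    Measurable F := by
  have hcont : ContinuousOn f (Ioi 0) := hF.1.continuousOn isOpen_Ioi
  have hfp : Measurable ((Ioi (0:ℝ)).piecewise f (fun _ => f 1)) :=
    hcont.measurable_piecewise continuousOn_const measurableSet_Ioi
  have hFeq : F = fun z => if z = 0 then F 0 else if z = ⊤ then F ⊤ else
      (((Ioi (0:ℝ)).piecewise f (fun _ => f 1)) z.toReal : EReal) := by
    funext z
    by_cases hz0 : z = 0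
    · simp [hz0]
    by_cases hzt : z = ⊤
    · simp [hzt, hz0]
    · have hzpos : (0:ℝ) < z.toReal := ENNReal.toReal_pos hz0 hzt
      rw [if_neg hz0, if_neg hzt, hF.2.1 z hz0 hzt,
        Set.piecewise_eq_of_mem _ _ _ (mem_Ioi.mpr hzpos)]
  rw [hFeq]
  apply Measurable.ite ((measurableSet_singleton (0:ℝ≥0∞)).congr (by ext x; simp)) measurable_const
  apply Measurable.ite ((measurableSet_singleton (⊤:ℝ≥0∞)).congr (by ext x; simp)) measurable_const
  exact Measurable.coe_real_ereal (hfp.comp ENNReal.measurable_toReal)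
end More

/-- positive rationals, as an index type for the countable family of tangent lines -/
abbrev Qp := {q : ℚ // 0 < (q : ℝ)}

section Analytic
variable {f : ℝ → ℝ} {F : ℝ≥0∞ → EReal}

/-- from the countable family of tangent-line bounds, the bound at `0`. -/
lemma c_le_F0 (hF : IsConcaveExtension f F) (La Lb : Qp → ℝ)
    (hmaj : ∀ q : Qp, ∀ x, 0 < x → f x ≤ La q * x + Lb q)
    (htouch : ∀ q : Qp, La q * ((q : ℚ) : ℝ) + Lb q = f ((q : ℚ) : ℝ))
    {c : EReal} (hc : ∀ q : Qp, c ≤ ((Lb q : ℝ) : EReal)) : c ≤ F 0 := by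
  set qn : ℕ → Qp := fun k => ⟨((k : ℚ) + 2)⁻¹, by positivity⟩ with hqn
  set sn : ℕ → ℝ := fun k => (((k : ℝ) + 2))⁻¹ with hsn
  have hsval : ∀ k : ℕ, (((qn k : ℚ)) : ℝ) = sn k := by
    intro k; rw [hqn, hsn]; push_cast; norm_num
  have hspos : ∀ k, 0 < sn k := fun k => by rw [hsn]; positivity
  have hshalf : ∀ k, sn k ≤ 1/2 := by
    intro k
    rw [hsn, show (1:ℝ)/2 = 2⁻¹ by norm_num]
    exact inv_anti₀ two_pos (by linarith [Nat.cast_nonneg (α := ℝ) k])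
  have htendsn : Tendsto sn atTop (nhds 0) := by
    apply Filter.Tendsto.inv_tendsto_atTop
    exact tendsto_atTop_add_const_right _ 2 tendsto_natCast_atTop_atTop
  have htendsnW : Tendsto sn atTop (nhdsWithin 0 (Ioi 0)) :=
    tendsto_nhdsWithin_iff.mpr ⟨htendsn, Eventually.of_forall hspos⟩
  set β : ℕ → ℝ := fun k => (f (sn k) - sn k * f 1) / (1 - sn k) with hβ
  have hbn : ∀ k, Lb (qn k) ≤ β k := by
    intro k
    have h1 : f 1 ≤ La (qn k) * 1 + Lb (qn k) := hmaj (qn k) 1 one_pos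
    have h2 : La (qn k) * sn k + Lb (qn k) = f (sn k) := by
      have := htouch (qn k); rwa [hsval k] at this
    rw [hβ, le_div_iff₀ (by linarith [hshalf k] : (0:ℝ) < 1 - sn k)]
    nlinarith [hspos k, hshalf k]
  have hcβ : ∀ k, c ≤ ((β k : ℝ) : EReal) :=
    fun k => (hc (qn k)).trans (EReal.coe_le_coe_iff.mpr (hbn k))
  have hFne_top : F 0 ≠ ⊤ := by
    intro htop
    have hline : Tendsto (fun x : ℝ => ((La (qn 0) * x + Lb (qn 0) : ℝ) : EReal))
        (nhdsWithin 0 (Ioi 0)) (nhds ((Lb (qn 0) : ℝ) : EReal)) := by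
      rw [EReal.tendsto_coe]
      have : Tendsto (fun x : ℝ => La (qn 0) * x + Lb (qn 0)) (nhds 0)
          (nhds (La (qn 0) * 0 + Lb (qn 0))) := Continuous.tendsto (by continuity) 0
      rw [show La (qn 0) * 0 + Lb (qn 0) = Lb (qn 0) by ring] at this
      exact this.mono_left nhdsWithin_le_nhds
    have hle : F 0 ≤ ((Lb (qn 0) : ℝ) : EReal) := by
      refine le_of_tendsto_of_tendsto hF.2.2.1 hline ?_
      filter_upwards [self_mem_nhdsWithin] with x hx
      exact EReal.coe_le_coe_iff.mpr (hmaj (qn 0) x hx)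
    rw [htop] at hle
    exact EReal.coe_ne_top _ (top_le_iff.mp hle)
  rcases eq_bot_or_bot_lt (F 0) with hFb | hFbot
  · rw [hFb]
    have h1 : Tendsto (fun k => ((f (sn k) : ℝ) : EReal)) atTop (nhds ⊥) := by
      have := hF.2.2.1
      rw [hFb] at this
      exact this.comp htendsnW
    have hreal : ∀ x : ℝ, ∀ᶠ k in atTop, f (sn k) < x := by
      intro x
      have := (EReal.tendsto_nhds_bot_iff_real.mp h1) x
      filter_upwards [this] with k hk
      exact_mod_cast hk
    have hβbot : Tendsto β atTop atBot := by
      rw [tendsto_atBot]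
      intro b
      filter_upwards [hreal (min b 0 - |f 1|)] with k hk
      have hN : f (sn k) - sn k * f 1 ≤ min b 0 := by
        have habs : sn k * f 1 ≥ -|f 1| := by
          have h1 : |sn k * f 1| ≤ |f 1| := by
            rw [abs_mul, abs_of_pos (hspos k)]
            nlinarith [hshalf k, abs_nonneg (f 1), hspos k]
          linarith [neg_abs_le (sn k * f 1)]
        linarith
      have hNneg : f (sn k) - sn k * f 1 ≤ 0 := hN.trans (min_le_right b 0)
      have hsk := hspos k
      have hsk2 := hshalf k
      have hdiv : β k ≤ f (sn k) - sn k * f 1 := by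
        rw [hβ]
        rw [div_le_iff₀ (by linarith : (0:ℝ) < 1 - sn k)]
        nlinarith
      linarith [hN.trans (min_le_left b 0)]
    have hβtend : Tendsto (fun k => ((β k : ℝ) : EReal)) atTop (nhds ⊥) := by
      rw [EReal.tendsto_nhds_bot_iff_real]
      intro x
      filter_upwards [hβbot.eventually_le_atBot (x - 1)] with k hk
      exact_mod_cast (by linarith : β k < x)
    exact ge_of_tendsto hβtend (Eventually.of_forall hcβ)
  · have hL : F 0 = (((F 0).toReal : ℝ) : EReal) := (EReal.coe_toReal hFne_top hFbot.ne').symm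
    have hfs : Tendsto (fun k => f (sn k)) atTop (nhds ((F 0).toReal)) := by
      have := hF.2.2.1
      rw [hL] at this
      exact EReal.tendsto_coe.mp (this.comp htendsnW)
    have hβtend : Tendsto β atTop (nhds ((F 0).toReal)) := by
      have h := (hfs.sub (htendsn.mul_const (f 1))).div
        (tendsto_const_nhds.sub htendsn) (by norm_num : (1:ℝ) - 0 ≠ 0)
      simp at h; exact h
    rw [hL]
    exact ge_of_tendsto (EReal.tendsto_coe.mpr hβtend) (Eventually.of_forall hcβ)

/-- from the countable family of tangent-line bounds, the bound at interior points. -/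
lemma c_le_Fz (hF : IsConcaveExtension f F) (La Lb : Qp → ℝ)
    (hmaj : ∀ q : Qp, ∀ x, 0 < x → f x ≤ La q * x + Lb q)
    (htouch : ∀ q : Qp, La q * ((q : ℚ) : ℝ) + Lb q = f ((q : ℚ) : ℝ))
    {z : ℝ} (hz : 0 < z)
    {c : EReal} (hc : ∀ q : Qp, c ≤ ((La q * z + Lb q : ℝ) : EReal)) :
    c ≤ ((f z : ℝ) : EReal) := by
  have hex : ∀ k : ℕ, ∃ q : ℚ, z < q ∧ (q : ℝ) < z + ((k : ℝ) + 1)⁻¹ :=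
    fun k => exists_rat_btwn (lt_add_of_pos_right z (by positivity))
  choose qr hq1 hq2 using hex
  set Q : ℕ → Qp := fun k => ⟨qr k, lt_trans hz (hq1 k)⟩ with hQ
  have hqz1 : ∀ k, (qr k : ℝ) < z + 1 := by
    intro k
    have : ((k : ℝ) + 1)⁻¹ ≤ 1 := by
      rw [show (1:ℝ) = 1⁻¹ by norm_num]
      exact inv_anti₀ one_pos (by linarith [Nat.cast_nonneg (α := ℝ) k])
    linarith [hq2 k]
  set u : ℕ → ℝ := fun k =>
    f (qr k) + (z - qr k) * ((f (z + 1) - f (qr k)) / (z + 1 - qr k)) with hu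
  have hval_le : ∀ k, La (Q k) * z + Lb (Q k) ≤ u k := by
    intro k
    have ht : La (Q k) * (qr k : ℝ) + Lb (Q k) = f (qr k) := htouch (Q k)
    have hm : f (z + 1) ≤ La (Q k) * (z + 1) + Lb (Q k) := hmaj (Q k) (z + 1) (by linarith)
    have hdpos : (0:ℝ) < z + 1 - qr k := by linarith [hqz1 k]
    have hS : (f (z + 1) - f (qr k)) / (z + 1 - qr k) ≤ La (Q k) := by
      rw [div_le_iff₀ hdpos]
      nlinarith
    have hzq : z - (qr k : ℝ) < 0 := by linarith [hq1 k]
    rw [hu]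
    nlinarith [mul_le_mul_of_nonpos_left hS (le_of_lt hzq)]
  have hq : Tendsto (fun k => (qr k : ℝ)) atTop (nhds z) := by
    have hup : Tendsto (fun k : ℕ => z + ((k : ℝ) + 1)⁻¹) atTop (nhds (z + 0)) := by
      apply Tendsto.add tendsto_const_nhds
      apply Filter.Tendsto.inv_tendsto_atTop
      exact tendsto_atTop_add_const_right _ 1 tendsto_natCast_atTop_atTop
    rw [add_zero] at hup
    exact tendsto_of_tendsto_of_tendsto_of_le_of_le tendsto_const_nhds hup
      (fun k => (hq1 k).le) (fun k => (hq2 k).le)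
  have hqW : Tendsto (fun k => (qr k : ℝ)) atTop (nhdsWithin z (Ioi 0)) :=
    tendsto_nhdsWithin_iff.mpr ⟨hq, Eventually.of_forall (fun k => lt_trans hz (hq1 k))⟩
  have hfq : Tendsto (fun k => f (qr k)) atTop (nhds (f z)) :=
    ((hF.1.continuousOn isOpen_Ioi) z (mem_Ioi.mpr hz)).tendsto.comp hqW
  have hutend : Tendsto u atTop (nhds (f z)) := by
    have t2 : Tendsto (fun k => z - (qr k : ℝ)) atTop (nhds (z - z)) :=
      tendsto_const_nhds.sub hq
    have t3 : Tendsto (fun k => f (z + 1) - f (qr k)) atTop (nhds (f (z + 1) - f z)) :=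
      tendsto_const_nhds.sub hfq
    have t4 : Tendsto (fun k => z + 1 - (qr k : ℝ)) atTop (nhds (z + 1 - z)) :=
      tendsto_const_nhds.sub hq
    have t5 := t3.div t4 (by norm_num : z + 1 - z ≠ 0)
    have := hfq.add (t2.mul t5)
    simpa using this
  have hcu : ∀ k, c ≤ ((u k : ℝ) : EReal) :=
    fun k => (hc (Q k)).trans (EReal.coe_le_coe_iff.mpr (hval_le k))
  exact ge_of_tendsto (EReal.tendsto_coe.mpr hutend) (Eventually.of_forall hcu)

end Analytic

lemma coe_ennreal_eq_coe_toReal {z : ℝ≥0∞} (hz : z ≠ ⊤) :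
    (z : EReal) = ((z.toReal : ℝ) : EReal) := by
  rw [← EReal.toReal_coe_ennreal (x := z),
    EReal.coe_toReal (by simpa using hz) (EReal.coe_ennreal_ne_bot z)]

lemma le_of_not_conds {p n : ℝ≥0∞} {r : ℝ} (hn : n ≠ ⊤)
    (h : ∀ k : ℕ, ¬(n + ENNReal.ofReal (r + ((k : ℝ) + 1)⁻¹) ≤
      p + ENNReal.ofReal (-(r + ((k : ℝ) + 1)⁻¹)))) :
    (p : EReal) - (n : EReal) ≤ (r : EReal) := by
  have hp : p ≠ ⊤ := by
    intro hp
    exact h 0 (by rw [hp, top_add]; exact le_top)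
  have hlt : ∀ k : ℕ, p.toReal - n.toReal < r + ((k : ℝ) + 1)⁻¹ := by
    intro k
    have hk := not_le.mp (h k)
    have hmono := ENNReal.toReal_strict_mono
      (ENNReal.add_ne_top.mpr ⟨hn, ENNReal.ofReal_ne_top⟩) hk
    rw [ENNReal.toReal_add hp ENNReal.ofReal_ne_top, ENNReal.toReal_add hn ENNReal.ofReal_ne_top,
      ENNReal.toReal_ofReal', ENNReal.toReal_ofReal'] at hmono
    rcases le_total (r + ((k : ℝ) + 1)⁻¹) 0 with hs | hs
    · rw [max_eq_right hs, max_eq_left (neg_nonneg.mpr hs)] at hmono; linarith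
    · rw [max_eq_left hs, max_eq_right (neg_nonpos.mpr hs)] at hmono; linarith
  have hle : p.toReal - n.toReal ≤ r := by
    by_contra hcon
    push_neg at hcon
    obtain ⟨k, hk⟩ := exists_nat_one_div_lt (by linarith : 0 < p.toReal - n.toReal - r)
    have := hlt k
    rw [one_div] at hk
    linarith
  calc (p : EReal) - (n : EReal) = ((p.toReal - n.toReal : ℝ) : EReal) := by
        rw [coe_ennreal_eq_coe_toReal hp, coe_ennreal_eq_coe_toReal hn, ← EReal.coe_sub]
  _ ≤ (r : EReal) := EReal.coe_le_coe_iff.mpr hle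


section Core
variable {Ω : Type*} {mΩ : MeasurableSpace Ω} (μ : Measure Ω) [IsProbabilityMeasure μ]
  (m : MeasurableSpace Ω)
  {f : ℝ → ℝ} {F : ℝ≥0∞ → EReal}
  (X G p n : Ω → ℝ≥0∞)

lemma measurable_ereal_neg : Measurable (fun x : EReal => -x) :=
  EReal.measurable_of_measurable_real (by
    have h : Measurable fun p : ℝ => ((-p : ℝ) : EReal) :=
      measurable_coe_real_ereal.comp measurable_neg
    simpa using h)

lemma lineE_const (b : ℝ) (z : ℝ≥0∞) : lineE 0 b z = ((b : ℝ) : EReal) := by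
  by_cases hz : z = ⊤ <;> simp [lineE, hz]

/-- pointwise domination of `ofReal` of an affine function. -/
lemma ofReal_affine_le (a b : ℝ) (x : ℝ≥0∞) :
    ENNReal.ofReal (a * x.toReal + b) ≤ ENNReal.ofReal |a| * x + ENNReal.ofReal |b| := by
  calc ENNReal.ofReal (a * x.toReal + b) ≤ ENNReal.ofReal (|a| * x.toReal + |b|) := by
        apply ENNReal.ofReal_le_ofReal
        have h1 : a * x.toReal ≤ |a| * x.toReal :=
          mul_le_mul_of_nonneg_right (le_abs_self a) ENNReal.toReal_nonneg
        have h2 : b ≤ |b| := le_abs_self b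
        linarith
  _ = ENNReal.ofReal (|a| * x.toReal) + ENNReal.ofReal |b| := by
        rw [ENNReal.ofReal_add (by positivity) (abs_nonneg b)]
  _ = ENNReal.ofReal |a| * ENNReal.ofReal x.toReal + ENNReal.ofReal |b| := by
        rw [ENNReal.ofReal_mul (abs_nonneg a)]
  _ ≤ ENNReal.ofReal |a| * x + ENNReal.ofReal |b| := by
        gcongr
        exact ENNReal.ofReal_toReal_le

theorem core_lemma (hm : m ≤ mΩ) (hF : IsConcaveExtension f F)
    (hX : Measurable[mΩ] X) (hGm : Measurable[m] G)
    (hGX : ∀ A : Set Ω, MeasurableSet[m] A → ∫⁻ ω in A, G ω ∂μ = ∫⁻ ω in A, X ω ∂μ)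
    (hp : ∀ A : Set Ω, MeasurableSet[m] A →
      ∫⁻ ω in A, p ω ∂μ = ∫⁻ ω in A, erealPos (F (X ω)) ∂μ)
    (hn : ∀ A : Set Ω, MeasurableSet[m] A →
      ∫⁻ ω in A, n ω ∂μ = ∫⁻ ω in A, erealPos (-(F (X ω))) ∂μ)
    {a b : ℝ} (hmaj : ∀ x, 0 < x → f x ≤ a * x + b)
    {B : Set Ω} (hB : MeasurableSet[m] B)
    (hfin : a = 0 ∨ ∫⁻ ω in B, X ω ∂μ ≠ ⊤) :
    ∫⁻ ω in B, p ω ∂μ + ∫⁻ ω in B, erealPos (-(lineE a b (G ω))) ∂μ ≤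
      ∫⁻ ω in B, erealPos (lineE a b (G ω)) ∂μ + ∫⁻ ω in B, n ω ∂μ := by
  have hGmΩ : Measurable[mΩ] G := hGm.mono hm le_rfl
  have hmFX : Measurable[mΩ] (fun ω => erealPos (F (X ω))) :=
    measurable_erealPos.comp ((measurable_F hF).comp hX)
  have hmFXn : Measurable[mΩ] (fun ω => erealPos (-(F (X ω)))) :=
    measurable_erealPos.comp (measurable_ereal_neg.comp ((measurable_F hF).comp hX))
  have hmLX : Measurable[mΩ] (fun ω => erealPos (lineE a b (X ω))) :=
    measurable_erealPos.comp ((measurable_lineE a b).comp hX)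
  have hmLXn : Measurable[mΩ] (fun ω => erealPos (-(lineE a b (X ω)))) :=
    measurable_erealPos.comp (measurable_ereal_neg.comp ((measurable_lineE a b).comp hX))
  have hmLG : Measurable[mΩ] (fun ω => erealPos (lineE a b (G ω))) :=
    measurable_erealPos.comp ((measurable_lineE a b).comp hGmΩ)
  have hmLGn : Measurable[mΩ] (fun ω => erealPos (-(lineE a b (G ω)))) :=
    measurable_erealPos.comp (measurable_ereal_neg.comp ((measurable_lineE a b).comp hGmΩ))
  set ν := μ.restrict B with hν
  -- step 2 : pointwise inequality integrated
  have key1 : ∫⁻ ω, erealPos (F (X ω)) ∂ν + ∫⁻ ω, erealPos (-(lineE a b (X ω))) ∂ν ≤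
      ∫⁻ ω, erealPos (lineE a b (X ω)) ∂ν + ∫⁻ ω, erealPos (-(F (X ω))) ∂ν := by
    rw [← lintegral_add_left hmFX, ← lintegral_add_left hmLX]
    exact lintegral_mono fun ω => erealPos_add_le (F_le_lineE hF hmaj (X ω))
  -- step 3 : linearity across the conditional expectation
  have step3 : ∫⁻ ω, erealPos (lineE a b (X ω)) ∂ν + ∫⁻ ω, erealPos (-(lineE a b (G ω))) ∂ν =
        ∫⁻ ω, erealPos (lineE a b (G ω)) ∂ν + ∫⁻ ω, erealPos (-(lineE a b (X ω))) ∂ν ∧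
      ∫⁻ ω, erealPos (lineE a b (X ω)) ∂ν ≠ ⊤ ∧ ∫⁻ ω, erealPos (-(lineE a b (X ω))) ∂ν ≠ ⊤ := by
    by_cases hXfin : ∫⁻ ω, X ω ∂ν = ⊤
    · -- then a = 0 and the line is constant
      have ha : a = 0 := hfin.resolve_right (by rw [hν]; exact fun h => h hXfin)
      subst ha
      have h1 : ∀ z : ℝ≥0∞, erealPos (lineE 0 b z) = ENNReal.ofReal b := by
        intro z; rw [lineE_const, erealPos_coe]
      have h2 : ∀ z : ℝ≥0∞, erealPos (-(lineE 0 b z)) = ENNReal.ofReal (-b) := by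
        intro z; rw [lineE_const, erealPos_neg_coe]
      simp only [h1, h2, lintegral_const]
      refine ⟨trivial, ?_, ?_⟩ <;>
        exact ENNReal.mul_ne_top ENNReal.ofReal_ne_top (measure_ne_top ν _)
    · have hGfin : ∫⁻ ω, G ω ∂ν ≠ ⊤ := by
        rw [hν] at hXfin ⊢; rw [hGX B hB]; exact hXfin
      have hXae : ∀ᵐ ω ∂ν, X ω < ⊤ := ae_lt_top hX hXfin
      have hGae : ∀ᵐ ω ∂ν, G ω < ⊤ := ae_lt_top hGmΩ hGfin
      set rX : Ω → ℝ := fun ω => a * (X ω).toReal + b with hrX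
      set rG : Ω → ℝ := fun ω => a * (G ω).toReal + b with hrG
      have hcX1 : ∫⁻ ω, erealPos (lineE a b (X ω)) ∂ν = ∫⁻ ω, ENNReal.ofReal (rX ω) ∂ν := by
        apply lintegral_congr_ae
        filter_upwards [hXae] with ω hω
        rw [lineE_ne_top a b hω.ne, erealPos_coe]
      have hcX2 : ∫⁻ ω, erealPos (-(lineE a b (X ω))) ∂ν =
          ∫⁻ ω, ENNReal.ofReal (-(rX ω)) ∂ν := by
        apply lintegral_congr_ae
        filter_upwards [hXae] with ω hω
        rw [lineE_ne_top a b hω.ne, erealPos_neg_coe]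
      have hcG1 : ∫⁻ ω, erealPos (lineE a b (G ω)) ∂ν = ∫⁻ ω, ENNReal.ofReal (rG ω) ∂ν := by
        apply lintegral_congr_ae
        filter_upwards [hGae] with ω hω
        rw [lineE_ne_top a b hω.ne, erealPos_coe]
      have hcG2 : ∫⁻ ω, erealPos (-(lineE a b (G ω))) ∂ν =
          ∫⁻ ω, ENNReal.ofReal (-(rG ω)) ∂ν := by
        apply lintegral_congr_ae
        filter_upwards [hGae] with ω hω
        rw [lineE_ne_top a b hω.ne, erealPos_neg_coe]
      -- finiteness bounds
      have haff : ∀ (a' b' : ℝ) (Y : Ω → ℝ≥0∞), Measurable[mΩ] Y → ∫⁻ ω, Y ω ∂ν ≠ ⊤ →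
          ∫⁻ ω, ENNReal.ofReal (a' * (Y ω).toReal + b') ∂ν ≠ ⊤ := by
        intro a' b' Y hY hYfin
        have hle : ∫⁻ ω, ENNReal.ofReal (a' * (Y ω).toReal + b') ∂ν ≤
            ENNReal.ofReal |a'| * ∫⁻ ω, Y ω ∂ν + ENNReal.ofReal |b'| * ν univ := by
          calc ∫⁻ ω, ENNReal.ofReal (a' * (Y ω).toReal + b') ∂ν ≤
              ∫⁻ ω, (ENNReal.ofReal |a'| * Y ω + ENNReal.ofReal |b'|) ∂ν :=
                lintegral_mono fun ω => ofReal_affine_le a' b' (Y ω)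
          _ = _ := by rw [lintegral_add_right _ measurable_const, lintegral_const_mul _ hY,
                lintegral_const]
        intro htop
        rw [htop] at hle
        exact (ENNReal.add_ne_top.mpr ⟨ENNReal.mul_ne_top ENNReal.ofReal_ne_top hYfin,
          ENNReal.mul_ne_top ENNReal.ofReal_ne_top (measure_ne_top ν _)⟩) (top_le_iff.mp hle)
      have hnegX : (fun ω => ENNReal.ofReal (-(rX ω))) =
          fun ω => ENNReal.ofReal ((-a) * (X ω).toReal + (-b)) := by
        funext ω; congr 1; simp [hrX]; ring
      have hnegG : (fun ω => ENNReal.ofReal (-(rG ω))) =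
          fun ω => ENNReal.ofReal ((-a) * (G ω).toReal + (-b)) := by
        funext ω; congr 1; simp [hrG]; ring
      have hf1 : ∫⁻ ω, ENNReal.ofReal (rX ω) ∂ν ≠ ⊤ := haff a b X hX hXfin
      have hf2 : ∫⁻ ω, ENNReal.ofReal (-(rX ω)) ∂ν ≠ ⊤ := by
        rw [show (fun ω => ENNReal.ofReal (-(rX ω))) = _ from hnegX]
        exact haff (-a) (-b) X hX hXfin
      have hf3 : ∫⁻ ω, ENNReal.ofReal (rG ω) ∂ν ≠ ⊤ := haff a b G hGmΩ hGfin
      have hf4 : ∫⁻ ω, ENNReal.ofReal (-(rG ω)) ∂ν ≠ ⊤ := by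
        rw [show (fun ω => ENNReal.ofReal (-(rG ω))) = _ from hnegG]
        exact haff (-a) (-b) G hGmΩ hGfin
      -- real-integral identities
      have hXint : Integrable (fun ω => (X ω).toReal) ν :=
        integrable_toReal_of_lintegral_ne_top hX.aemeasurable hXfin
      have hGint : Integrable (fun ω => (G ω).toReal) ν :=
        integrable_toReal_of_lintegral_ne_top hGmΩ.aemeasurable hGfin
      have hrXint : Integrable rX ν := (hXint.const_mul a).add (integrable_const b)
      have hrGint : Integrable rG ν := (hGint.const_mul a).add (integrable_const b)
      have hXG : ∫ ω, (X ω).toReal ∂ν = ∫ ω, (G ω).toReal ∂ν := by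
        rw [integral_toReal hX.aemeasurable hXae, integral_toReal hGmΩ.aemeasurable hGae]
        congr 1
        rw [hν]
        exact (hGX B hB).symm
      have hIrXG : ∫ ω, rX ω ∂ν = ∫ ω, rG ω ∂ν := by
        rw [hrX, hrG, integral_add (hXint.const_mul a) (integrable_const b),
          integral_add (hGint.const_mul a) (integrable_const b),
          integral_const_mul, integral_const_mul, hXG]
      have hposX := integral_eq_lintegral_pos_part_sub_lintegral_neg_part hrXint
      have hposG := integral_eq_lintegral_pos_part_sub_lintegral_neg_part hrGint
      rw [hcX1, hcX2, hcG1, hcG2]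
      refine ⟨?_, hf1, hf2⟩
      have hreal : (∫⁻ ω, ENNReal.ofReal (rX ω) ∂ν).toReal -
          (∫⁻ ω, ENNReal.ofReal (-(rX ω)) ∂ν).toReal =
          (∫⁻ ω, ENNReal.ofReal (rG ω) ∂ν).toReal -
          (∫⁻ ω, ENNReal.ofReal (-(rG ω)) ∂ν).toReal := by
        rw [← hposX, ← hposG]; exact hIrXG
      apply (ENNReal.toReal_eq_toReal_iff' (ENNReal.add_ne_top.mpr ⟨hf1, hf4⟩)
        (ENNReal.add_ne_top.mpr ⟨hf3, hf2⟩)).mp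
      rw [ENNReal.toReal_add hf1 hf4, ENNReal.toReal_add hf3 hf2]
      linarith
  -- step 4 : combine
  obtain ⟨heq, hA1, hA2⟩ := step3
  rw [hp B hB, hn B hB]
  have hC : ∫⁻ ω, erealPos (-(lineE a b (X ω))) ∂ν + ∫⁻ ω, erealPos (lineE a b (X ω)) ∂ν ≠ ⊤ :=
    ENNReal.add_ne_top.mpr ⟨hA2, hA1⟩
  rw [← ENNReal.add_le_add_iff_right hC]
  calc ∫⁻ ω, erealPos (F (X ω)) ∂ν + ∫⁻ ω, erealPos (-(lineE a b (G ω))) ∂ν +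
        (∫⁻ ω, erealPos (-(lineE a b (X ω))) ∂ν + ∫⁻ ω, erealPos (lineE a b (X ω)) ∂ν)
      = (∫⁻ ω, erealPos (F (X ω)) ∂ν + ∫⁻ ω, erealPos (-(lineE a b (X ω))) ∂ν) +
        (∫⁻ ω, erealPos (lineE a b (X ω)) ∂ν + ∫⁻ ω, erealPos (-(lineE a b (G ω))) ∂ν) := by
        ring
  _ = (∫⁻ ω, erealPos (F (X ω)) ∂ν + ∫⁻ ω, erealPos (-(lineE a b (X ω))) ∂ν) +
        (∫⁻ ω, erealPos (lineE a b (G ω)) ∂ν + ∫⁻ ω, erealPos (-(lineE a b (X ω))) ∂ν) := by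
        rw [heq]
  _ ≤ (∫⁻ ω, erealPos (lineE a b (X ω)) ∂ν + ∫⁻ ω, erealPos (-(F (X ω))) ∂ν) +
        (∫⁻ ω, erealPos (lineE a b (G ω)) ∂ν + ∫⁻ ω, erealPos (-(lineE a b (X ω))) ∂ν) := by
        exact add_le_add_left key1 _
  _ = ∫⁻ ω, erealPos (lineE a b (G ω)) ∂ν + ∫⁻ ω, erealPos (-(F (X ω))) ∂ν +
        (∫⁻ ω, erealPos (-(lineE a b (X ω))) ∂ν + ∫⁻ ω, erealPos (lineE a b (X ω)) ∂ν) := by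
        ring

lemma ofReal_shift (r ε : ℝ) (hε : 0 ≤ ε) :
    ENNReal.ofReal (r + ε) + ENNReal.ofReal (-r) =
      ENNReal.ofReal (-(r + ε)) + ENNReal.ofReal r + ENNReal.ofReal ε := by
  rcases le_total 0 r with hr | hr
  · rw [ENNReal.ofReal_eq_zero.mpr (by linarith : -r ≤ 0),
      ENNReal.ofReal_eq_zero.mpr (by linarith : -(r + ε) ≤ 0),
      ENNReal.ofReal_add hr hε]
    ring
  · rcases le_total 0 (r + ε) with hrε | hrε
    · rw [ENNReal.ofReal_eq_zero.mpr (by linarith : r ≤ 0),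
        ENNReal.ofReal_eq_zero.mpr (by linarith : -(r + ε) ≤ 0),
        ← ENNReal.ofReal_add hrε (by linarith : 0 ≤ -r)]
      norm_num
    · rw [ENNReal.ofReal_eq_zero.mpr hrε, ENNReal.ofReal_eq_zero.mpr hr, zero_add, add_zero,
        ← ENNReal.ofReal_add (by linarith : (0:ℝ) ≤ -(r + ε)) hε]
      congr 1; ring

lemma neg_line_bound {a : ℝ} (b : ℝ) (ha : a < 0) (z : ℝ≥0∞) :
    ENNReal.ofReal (-a) * z ≤ erealPos (-(lineE a b z)) + ENNReal.ofReal |b| := by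
  by_cases hz : z = ⊤
  · subst hz
    have : lineE a b ⊤ = ⊥ := by simp [lineE, ha, not_lt.mpr ha.le]
    rw [this]
    simp
  · rw [lineE_ne_top a b hz, erealPos_neg_coe]
    set t := z.toReal with ht
    have hz' : z = ENNReal.ofReal t := (ENNReal.ofReal_toReal hz).symm
    rw [hz', ← ENNReal.ofReal_mul (by linarith : 0 ≤ -a)]
    calc ENNReal.ofReal (-a * t) ≤ ENNReal.ofReal (max (-(a * t + b)) 0 + |b|) := by
          apply ENNReal.ofReal_le_ofReal
          have h1 : -(a*t+b) ≤ max (-(a*t+b)) 0 := le_max_left _ _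
          have h2 : b ≤ |b| := le_abs_self b
          have h3 : -b ≤ |b| := neg_le_abs b
          nlinarith [le_max_right (-(a*t+b)) (0:ℝ)]
    _ = ENNReal.ofReal (max (-(a * t + b)) 0) + ENNReal.ofReal |b| :=
          ENNReal.ofReal_add (le_max_right _ _) (abs_nonneg b)
    _ = ENNReal.ofReal (-(a * t + b)) + ENNReal.ofReal |b| := by
          rw [← ofReal_eq_ofReal_max]

theorem badset_null (hm : m ≤ mΩ) (hF : IsConcaveExtension f F)
    (hX : Measurable[mΩ] X) (hGm : Measurable[m] G)
    (hpm : Measurable[m] p) (hnm : Measurable[m] n)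
    (hGX : ∀ A : Set Ω, MeasurableSet[m] A → ∫⁻ ω in A, G ω ∂μ = ∫⁻ ω in A, X ω ∂μ)
    (hp : ∀ A : Set Ω, MeasurableSet[m] A →
      ∫⁻ ω in A, p ω ∂μ = ∫⁻ ω in A, erealPos (F (X ω)) ∂μ)
    (hn : ∀ A : Set Ω, MeasurableSet[m] A →
      ∫⁻ ω in A, n ω ∂μ = ∫⁻ ω in A, erealPos (-(F (X ω))) ∂μ)
    {a b : ℝ} (hmaj : ∀ x, 0 < x → f x ≤ a * x + b)
    (M : ℕ) (ε : ℝ) (hε : 0 < ε) :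
    μ {ω | n ω ≤ M ∧ (a = 0 ∨ G ω ≤ M) ∧
        n ω + ENNReal.ofReal (a * (G ω).toReal + b + ε) ≤
          p ω + ENNReal.ofReal (-(a * (G ω).toReal + b + ε))} = 0 := by
  classical
  set r : Ω → ℝ := fun ω => a * (G ω).toReal + b with hr
  set B : Set Ω := {ω | n ω ≤ M ∧ (a = 0 ∨ G ω ≤ M) ∧
      n ω + ENNReal.ofReal (r ω + ε) ≤ p ω + ENNReal.ofReal (-(r ω + ε))} with hB
  have hrm : Measurable[m] r := ((hGm.ennreal_toReal).const_mul a).add_const b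
  have hBeq : B = ({ω | n ω ≤ (M:ℝ≥0∞)} ∩ ({ω | a = 0 ∨ G ω ≤ (M:ℝ≥0∞)} ∩
      {ω | n ω + ENNReal.ofReal (r ω + ε) ≤ p ω + ENNReal.ofReal (-(r ω + ε))})) := by
    ext ω
    constructor
    · intro h; exact ⟨h.1, h.2.1, h.2.2⟩
    · intro h; exact ⟨h.1, h.2.1, h.2.2⟩
  have hBm : MeasurableSet[m] B := by
    rw [hBeq]
    refine (measurableSet_le hnm measurable_const).inter (MeasurableSet.inter ?_ ?_)
    · by_cases ha : a = 0
      · have : {ω | a = 0 ∨ G ω ≤ (M:ℝ≥0∞)} = univ := by ext ω; simp [ha]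
        rw [this]; exact MeasurableSet.univ
      · have : {ω | a = 0 ∨ G ω ≤ (M:ℝ≥0∞)} = {ω | G ω ≤ (M:ℝ≥0∞)} := by ext ω; simp [ha]
        rw [this]; exact measurableSet_le hGm measurable_const
    · exact measurableSet_le
        (hnm.add ((hrm.add_const ε).ennreal_ofReal))
        (hpm.add (((hrm.add_const ε).neg).ennreal_ofReal))
  have hGmΩ : Measurable[mΩ] G := hGm.mono hm le_rfl
  have hrmΩ : Measurable[mΩ] r := hrm.mono hm le_rfl
  have hpmΩ : Measurable[mΩ] p := hpm.mono hm le_rfl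
  have hnmΩ : Measurable[mΩ] n := hnm.mono hm le_rfl
  have hfin : a = 0 ∨ ∫⁻ ω in B, X ω ∂μ ≠ ⊤ := by
    by_cases ha : a = 0
    · exact Or.inl ha
    · refine Or.inr ?_
      rw [← hGX B hBm]
      have hle : ∫⁻ ω in B, G ω ∂μ ≤ ∫⁻ _ in B, (M:ℝ≥0∞) ∂μ :=
        setLIntegral_mono measurable_const (fun ω hω => (hω.2.1.resolve_left ha))
      rw [setLIntegral_const] at hle
      intro htop
      rw [htop] at hle
      exact (ENNReal.mul_ne_top (ENNReal.natCast_ne_top M) (measure_ne_top μ B))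
        (top_le_iff.mp hle)
  -- the interval bound on r over B
  have hrbound : ∀ ω ∈ B, |r ω| ≤ |a| * M + |b| := by
    intro ω hω
    have htR : 0 ≤ (G ω).toReal := ENNReal.toReal_nonneg
    have habs : |r ω| ≤ |a| * (G ω).toReal + |b| := by
      simp only [hr]
      calc |a * (G ω).toReal + b| ≤ |a * (G ω).toReal| + |b| := abs_add_le _ _
      _ = |a| * (G ω).toReal + |b| := by rw [abs_mul, abs_of_nonneg htR]
    rcases hω.2.1 with ha | hG
    · subst ha; simpa using habs
    · have htM : (G ω).toReal ≤ (M : ℝ) := by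
        have := ENNReal.toReal_mono (ENNReal.natCast_ne_top M) hG
        simpa using this
      have : |a| * (G ω).toReal ≤ |a| * M := by
        apply mul_le_mul_of_nonneg_left htM (abs_nonneg a)
      linarith
  have hCbound : ∀ (s : Ω → ℝ), (∀ ω ∈ B, |s ω| ≤ |a| * M + |b| + ε) →
      ∫⁻ ω in B, ENNReal.ofReal (s ω) ∂μ ≠ ⊤ := by
    intro s hs
    have hle : ∫⁻ ω in B, ENNReal.ofReal (s ω) ∂μ ≤
        ∫⁻ _ in B, ENNReal.ofReal (|a| * M + |b| + ε) ∂μ := by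
      apply setLIntegral_mono' (hm _ hBm)
      intro ω hω
      exact ENNReal.ofReal_le_ofReal ((le_abs_self _).trans (hs ω hω))
    rw [setLIntegral_const] at hle
    intro htop
    rw [htop] at hle
    exact (ENNReal.mul_ne_top ENNReal.ofReal_ne_top (measure_ne_top μ B)) (top_le_iff.mp hle)
  -- integrated pointwise inequality from the definition of B
  have hI : ∫⁻ ω in B, n ω ∂μ + ∫⁻ ω in B, ENNReal.ofReal (r ω + ε) ∂μ ≤
      ∫⁻ ω in B, p ω ∂μ + ∫⁻ ω in B, ENNReal.ofReal (-(r ω + ε)) ∂μ := by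
    rw [← lintegral_add_left hnmΩ, ← lintegral_add_left hpmΩ]
    apply setLIntegral_mono
      (hpmΩ.add (((hrmΩ.add_const ε).neg).ennreal_ofReal))
    intro ω hω
    exact hω.2.2
  -- the conditional-expectation core inequality, rewritten on B
  have hcore := core_lemma μ m X G p n hm hF hX hGm hGX hp hn hmaj hBm hfin
  have hline : ∀ ω ∈ B, lineE a b (G ω) = ((r ω : ℝ) : EReal) := by
    intro ω hω
    rcases hω.2.1 with ha | hG
    · subst ha
      rw [lineE_const b (G ω)]
      norm_num [hr]
    · exact lineE_ne_top a b (lt_of_le_of_lt hG (ENNReal.natCast_lt_top M)).ne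
  have hL1 : ∫⁻ ω in B, erealPos (lineE a b (G ω)) ∂μ =
      ∫⁻ ω in B, ENNReal.ofReal (r ω) ∂μ := by
    apply setLIntegral_congr_fun (hm _ hBm)
    intro ω hω
    dsimp only
    rw [hline ω hω, erealPos_coe]
  have hL2 : ∫⁻ ω in B, erealPos (-(lineE a b (G ω))) ∂μ =
      ∫⁻ ω in B, ENNReal.ofReal (-(r ω)) ∂μ := by
    apply setLIntegral_congr_fun (hm _ hBm)
    intro ω hω
    dsimp only
    rw [hline ω hω, erealPos_neg_coe]
  rw [hL1, hL2] at hcore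
  -- the exact shift identity, integrated
  have hIII : ∫⁻ ω in B, ENNReal.ofReal (r ω + ε) ∂μ + ∫⁻ ω in B, ENNReal.ofReal (-(r ω)) ∂μ =
      ∫⁻ ω in B, ENNReal.ofReal (-(r ω + ε)) ∂μ + ∫⁻ ω in B, ENNReal.ofReal (r ω) ∂μ +
        ENNReal.ofReal ε * μ B := by
    rw [← lintegral_add_left ((hrmΩ.add_const ε).ennreal_ofReal),
      ← setLIntegral_const B (ENNReal.ofReal ε),
      ← lintegral_add_left (show Measurable[mΩ] (fun ω => ENNReal.ofReal (-(r ω + ε))) from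
        ((hrmΩ.add_const ε).neg).ennreal_ofReal),
      ← lintegral_add_left (show Measurable[mΩ] (fun ω => ENNReal.ofReal (-(r ω + ε)) +
        ENNReal.ofReal (r ω)) from ((((hrmΩ.add_const ε).neg).ennreal_ofReal).add
        (hrmΩ.ennreal_ofReal)))]
    apply lintegral_congr
    intro ω
    exact ofReal_shift (r ω) ε hε.le
  -- put everything together and cancel
  set In := ∫⁻ ω in B, n ω ∂μ
  set Ip := ∫⁻ ω in B, p ω ∂μ
  set X' := ∫⁻ ω in B, ENNReal.ofReal (r ω + ε) ∂μ
  set Y' := ∫⁻ ω in B, ENNReal.ofReal (-(r ω + ε)) ∂μ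
  set W := ∫⁻ ω in B, ENNReal.ofReal (r ω) ∂μ
  set Y := ∫⁻ ω in B, ENNReal.ofReal (-(r ω)) ∂μ
  have hInfin : In ≠ ⊤ := by
    have hle : In ≤ ∫⁻ _ in B, (M:ℝ≥0∞) ∂μ :=
      setLIntegral_mono measurable_const (fun ω hω => hω.1)
    rw [setLIntegral_const] at hle
    intro htop; rw [htop] at hle
    exact (ENNReal.mul_ne_top (ENNReal.natCast_ne_top M) (measure_ne_top μ B))
      (top_le_iff.mp hle)
  have hWfin : W ≠ ⊤ := hCbound r (fun ω hω => (hrbound ω hω).trans (by linarith))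
  have hY'fin : Y' ≠ ⊤ := hCbound _ (fun ω hω => by
    rw [abs_neg]
    have h1 : |r ω + ε| ≤ |r ω| + |ε| := abs_add_le _ _
    have h2 := hrbound ω hω
    rw [abs_of_pos hε] at h1
    linarith)
  have hYfin : Y ≠ ⊤ := hCbound _ (fun ω hω => by
    rw [abs_neg]; exact (hrbound ω hω).trans (by linarith))
  have hchain : (In + Y' + W) + ENNReal.ofReal ε * μ B ≤ (In + Y' + W) + 0 := by
    have h1 : In + X' + Y ≤ Ip + Y' + Y := add_le_add_left hI Y
    have h2 : Ip + Y + Y' ≤ W + In + Y' := add_le_add_left hcore Y'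
    calc (In + Y' + W) + ENNReal.ofReal ε * μ B = In + (X' + Y) := by rw [hIII]; ring
    _ = In + X' + Y := by ring
    _ ≤ Ip + Y' + Y := h1
    _ = Ip + Y + Y' := by ring
    _ ≤ W + In + Y' := h2
    _ = (In + Y' + W) + 0 := by ring
  have hT : In + Y' + W ≠ ⊤ :=
    ENNReal.add_ne_top.mpr ⟨ENNReal.add_ne_top.mpr ⟨hInfin, hY'fin⟩, hWfin⟩
  have hz : ENNReal.ofReal ε * μ B ≤ 0 := (ENNReal.add_le_add_iff_left hT).mp hchain
  have : ENNReal.ofReal ε * μ B = 0 := le_antisymm hz zero_le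
  rcases mul_eq_zero.mp this with h | h
  · exact absurd h (by simpa [ENNReal.ofReal_eq_zero] using hε.not_ge)
  · exact h


theorem gtop_null (hm : m ≤ mΩ) (hF : IsConcaveExtension f F)
    (hX : Measurable[mΩ] X) (hGm : Measurable[m] G) (hnm : Measurable[m] n)
    (hGX : ∀ A : Set Ω, MeasurableSet[m] A → ∫⁻ ω in A, G ω ∂μ = ∫⁻ ω in A, X ω ∂μ)
    (hn : ∀ A : Set Ω, MeasurableSet[m] A →
      ∫⁻ ω in A, n ω ∂μ = ∫⁻ ω in A, erealPos (-(F (X ω))) ∂μ)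
    {a b : ℝ} (hmaj : ∀ x, 0 < x → f x ≤ a * x + b) (ha : a < 0) (M : ℕ) :
    μ {ω | n ω ≤ M ∧ G ω = ⊤} = 0 := by
  classical
  set B : Set Ω := {ω | n ω ≤ M ∧ G ω = ⊤} with hB
  have hBm : MeasurableSet[m] B := by
    have : B = {ω | n ω ≤ (M:ℝ≥0∞)} ∩ G ⁻¹' {⊤} := by
      ext ω; constructor
      · intro h; exact ⟨h.1, h.2⟩
      · intro h; exact ⟨h.1, h.2⟩
    rw [this]
    exact (measurableSet_le hnm measurable_const).inter (hGm (measurableSet_singleton ⊤))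
  by_contra hμ
  -- ∫_B X = ∫_B G = ⊤
  have hGtop : ∫⁻ ω in B, G ω ∂μ = ⊤ := by
    have : ∫⁻ ω in B, G ω ∂μ = ∫⁻ _ in B, (⊤:ℝ≥0∞) ∂μ :=
      setLIntegral_congr_fun (hm _ hBm) (fun ω hω => hω.2)
    rw [this, setLIntegral_const]
    exact ENNReal.top_mul hμ
  have hXtop : ∫⁻ ω in B, X ω ∂μ = ⊤ := by rw [← hGX B hBm]; exact hGtop
  -- the lower bound on the negative part of the line at X
  have hbound : (⊤:ℝ≥0∞) ≤ ∫⁻ ω in B, erealPos (-(lineE a b (X ω))) ∂μ +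
      ENNReal.ofReal |b| * μ B := by
    have h1 : ∫⁻ ω in B, ENNReal.ofReal (-a) * X ω ∂μ ≤
        ∫⁻ ω in B, (erealPos (-(lineE a b (X ω))) + ENNReal.ofReal |b|) ∂μ :=
      lintegral_mono fun ω => neg_line_bound b ha (X ω)
    rw [lintegral_const_mul _ hX, hXtop, ENNReal.mul_top
        (by simpa [ENNReal.ofReal_eq_zero] using (by linarith : ¬ -a ≤ 0))] at h1
    rw [lintegral_add_right _ measurable_const, setLIntegral_const] at h1
    exact h1
  have hfin2 : ENNReal.ofReal |b| * μ B ≠ ⊤ :=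
    ENNReal.mul_ne_top ENNReal.ofReal_ne_top (measure_ne_top μ B)
  have htopneg : ∫⁻ ω in B, erealPos (-(lineE a b (X ω))) ∂μ = ⊤ := by
    by_contra hfin1
    exact (ENNReal.add_ne_top.mpr ⟨hfin1, hfin2⟩) (top_le_iff.mp hbound)
  -- but that negative part is dominated by the one of F, whose integral is ≤ M
  have hmono : ∫⁻ ω in B, erealPos (-(lineE a b (X ω))) ∂μ ≤
      ∫⁻ ω in B, erealPos (-(F (X ω))) ∂μ := by
    apply lintegral_mono
    intro ω
    exact erealPos_mono (by
      have := F_le_lineE hF hmaj (X ω)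
      exact EReal.neg_le_neg_iff.mpr this)
  have hnle : ∫⁻ ω in B, erealPos (-(F (X ω))) ∂μ ≤ (M:ℝ≥0∞) := by
    rw [← hn B hBm]
    have hle : ∫⁻ ω in B, n ω ∂μ ≤ ∫⁻ _ in B, (M:ℝ≥0∞) ∂μ :=
      setLIntegral_mono measurable_const (fun ω hω => hω.1)
    rw [setLIntegral_const] at hle
    exact hle.trans (mul_le_of_le_one_right zero_le prob_le_one)
  rw [htopneg] at hmono
  exact (ENNReal.natCast_ne_top M) (top_le_iff.mp (hmono.trans hnle))


theorem ae_c_le (hm : m ≤ mΩ) (hF : IsConcaveExtension f F)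
    (hX : Measurable[mΩ] X) (hGm : Measurable[m] G)
    (hpm : Measurable[m] p) (hnm : Measurable[m] n)
    (hGX : ∀ A : Set Ω, MeasurableSet[m] A → ∫⁻ ω in A, G ω ∂μ = ∫⁻ ω in A, X ω ∂μ)
    (hp : ∀ A : Set Ω, MeasurableSet[m] A →
      ∫⁻ ω in A, p ω ∂μ = ∫⁻ ω in A, erealPos (F (X ω)) ∂μ)
    (hn : ∀ A : Set Ω, MeasurableSet[m] A →
      ∫⁻ ω in A, n ω ∂μ = ∫⁻ ω in A, erealPos (-(F (X ω))) ∂μ) :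
    ∀ᵐ ω ∂μ, ((p ω : EReal) - (n ω : EReal)) ≤ F (G ω) := by
  obtain ⟨La, Lb, hmaj, htouch⟩ : ∃ La Lb : Qp → ℝ,
      (∀ q : Qp, ∀ x, 0 < x → f x ≤ La q * x + Lb q) ∧
      (∀ q : Qp, La q * ((q : ℚ) : ℝ) + Lb q = f ((q : ℚ) : ℝ)) := by
    have h := fun q : Qp => exists_support_line hF.1 q.2
    choose La Lb h1 h2 using h
    exact ⟨La, Lb, h1, h2⟩
  have hbad : ∀ᵐ ω ∂μ, ∀ (q : Qp) (M k : ℕ),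
      ¬(n ω ≤ M ∧ (La q = 0 ∨ G ω ≤ M) ∧
        n ω + ENNReal.ofReal (La q * (G ω).toReal + Lb q + ((k : ℝ) + 1)⁻¹) ≤
          p ω + ENNReal.ofReal (-(La q * (G ω).toReal + Lb q + ((k : ℝ) + 1)⁻¹))) := by
    rw [ae_all_iff]; intro q; rw [ae_all_iff]; intro M; rw [ae_all_iff]; intro k
    have h0 := badset_null μ m X G p n hm hF hX hGm hpm hnm hGX hp hn (hmaj q) M
      (((k : ℝ) + 1)⁻¹) (by positivity)
    filter_upwards [measure_eq_zero_iff_ae_notMem.mp h0] with ω hω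
    exact hω
  have haeC : ∀ᵐ ω ∂μ, (F ⊤ ≠ ⊥ → F ⊤ ≠ ⊤ → n ω ≠ ⊤ → (p ω : EReal) - (n ω : EReal) ≤ F ⊤) := by
    by_cases hb : F ⊤ = ⊥
    · exact ae_of_all μ (fun ω h1 => absurd hb h1)
    by_cases ht : F ⊤ = ⊤
    · exact ae_of_all μ (fun ω _ h2 => absurd ht h2)
    · have hLeq : F ⊤ = (((F ⊤).toReal : ℝ) : EReal) := (EReal.coe_toReal ht hb).symm
      have hmajC : ∀ x, 0 < x → f x ≤ 0 * x + (F ⊤).toReal := by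
        intro x hx
        rw [zero_mul, zero_add]
        refine f_le_const_of_tendsto hF.1 ?_ x hx
        apply EReal.tendsto_coe.mp
        rw [← hLeq]
        exact hF.2.2.2
      have hbadC : ∀ᵐ ω ∂μ, ∀ (M k : ℕ),
          ¬(n ω ≤ M ∧ ((0:ℝ) = 0 ∨ G ω ≤ M) ∧
            n ω + ENNReal.ofReal (0 * (G ω).toReal + (F ⊤).toReal + ((k : ℝ) + 1)⁻¹) ≤
              p ω + ENNReal.ofReal (-(0 * (G ω).toReal + (F ⊤).toReal + ((k : ℝ) + 1)⁻¹))) := by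
        rw [ae_all_iff]; intro M; rw [ae_all_iff]; intro k
        have h0 := badset_null μ m X G p n hm hF hX hGm hpm hnm hGX hp hn hmajC M
          (((k : ℝ) + 1)⁻¹) (by positivity)
        filter_upwards [measure_eq_zero_iff_ae_notMem.mp h0] with ω hω
        exact hω
      filter_upwards [hbadC] with ω hω _ _ hn3
      obtain ⟨M, hM⟩ := ENNReal.exists_nat_gt hn3
      rw [hLeq]
      have hres := le_of_not_conds hn3 (fun k => fun hcond =>
        hω M k ⟨hM.le, Or.inl rfl, hcond⟩)
      simpa using hres
  have haeN : ∀ᵐ ω ∂μ, (F ⊤ = ⊥ → n ω ≠ ⊤ → G ω ≠ ⊤) := by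
    by_cases hb : F ⊤ = ⊥
    · have htb : Tendsto (fun x : ℝ => ((f x : ℝ) : EReal)) atTop (nhds ⊥) := by
        rw [← hb]; exact hF.2.2.2
      obtain ⟨a2, b2, hmaj2, ha2⟩ := exists_neg_line hF.1 htb
      have h0 : ∀ᵐ ω ∂μ, ∀ M : ℕ, ¬(n ω ≤ M ∧ G ω = ⊤) := by
        rw [ae_all_iff]; intro M
        have := gtop_null μ m X G n hm hF hX hGm hnm hGX hn hmaj2 ha2 M
        filter_upwards [measure_eq_zero_iff_ae_notMem.mp this] with ω hω
        exact hω
      filter_upwards [h0] with ω hω _ hn3 hGt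
      obtain ⟨M, hM⟩ := ENNReal.exists_nat_gt hn3
      exact hω M ⟨hM.le, hGt⟩
    · exact ae_of_all μ (fun ω h => absurd h hb)
  filter_upwards [hbad, haeC, haeN] with ω hbadω hCω hNω
  by_cases hn1 : n ω = ⊤
  · rw [hn1, EReal.coe_ennreal_top, EReal.sub_top]
    exact bot_le
  by_cases hGt : G ω = ⊤
  · by_cases hFt : F ⊤ = ⊤
    · rw [hGt, hFt]; exact le_top
    by_cases hFb : F ⊤ = ⊥
    · exact absurd hGt (hNω hFb hn1)
    · rw [hGt]; exact hCω hFb hFt hn1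
  obtain ⟨M1, hM1⟩ := ENNReal.exists_nat_gt hn1
  obtain ⟨M2, hM2⟩ := ENNReal.exists_nat_gt hGt
  have hkey : ∀ q : Qp,
      (p ω : EReal) - (n ω : EReal) ≤ ((La q * (G ω).toReal + Lb q : ℝ) : EReal) := by
    intro q
    apply le_of_not_conds hn1
    intro k hcond
    refine hbadω q (M1 + M2) k ⟨?_, Or.inr ?_, hcond⟩
    · exact hM1.le.trans (by exact_mod_cast Nat.cast_le.mpr (Nat.le_add_right M1 M2))
    · exact hM2.le.trans (by exact_mod_cast Nat.cast_le.mpr (Nat.le_add_left M2 M1))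
  by_cases hG0 : G ω = 0
  · rw [hG0]
    apply c_le_F0 hF La Lb hmaj htouch
    intro q
    have hq := hkey q
    rw [hG0] at hq
    simpa using hq
  · rw [hF.2.1 (G ω) hG0 hGt]
    exact c_le_Fz hF La Lb hmaj htouch (ENNReal.toReal_pos hG0 hGt) hkey


theorem main_ineq (hm : m ≤ mΩ) (hF : IsConcaveExtension f F)
    (hX : Measurable[mΩ] X) (hGm : Measurable[m] G)
    (hpm : Measurable[m] p) (hnm : Measurable[m] n)
    (hGX : ∀ A : Set Ω, MeasurableSet[m] A → ∫⁻ ω in A, G ω ∂μ = ∫⁻ ω in A, X ω ∂μ)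
    (hp : ∀ A : Set Ω, MeasurableSet[m] A →
      ∫⁻ ω in A, p ω ∂μ = ∫⁻ ω in A, erealPos (F (X ω)) ∂μ)
    (hn : ∀ A : Set Ω, MeasurableSet[m] A →
      ∫⁻ ω in A, n ω ∂μ = ∫⁻ ω in A, erealPos (-(F (X ω))) ∂μ)
    (hdX : ExpDefined μ (fun ω => F (X ω))) (hdG : ExpDefined μ (fun ω => F (G ω))) :
    eexp μ (fun ω => F (X ω)) ≤ eexp μ (fun ω => F (G ω)) := by
  have hGmΩ : Measurable[mΩ] G := hGm.mono hm le_rfl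
  have hpmΩ : Measurable[mΩ] p := hpm.mono hm le_rfl
  have hnmΩ : Measurable[mΩ] n := hnm.mono hm le_rfl
  have hmFG : Measurable[mΩ] (fun ω => erealPos (F (G ω))) :=
    measurable_erealPos.comp ((measurable_F hF).comp hGmΩ)
  have hmFGn : Measurable[mΩ] (fun ω => erealPos (-(F (G ω)))) :=
    measurable_erealPos.comp (measurable_ereal_neg.comp ((measurable_F hF).comp hGmΩ))
  have hae := ae_c_le μ m X G p n hm hF hX hGm hpm hnm hGX hp hn
  have hpt : ∀ᵐ ω ∂μ, p ω + erealPos (-(F (G ω))) ≤ erealPos (F (G ω)) + n ω := by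
    filter_upwards [hae] with ω hω
    by_cases hn1 : n ω = ⊤
    · rw [hn1, add_top]
      exact le_top
    · exact add_erealPos_le hn1 hω
  have hint : ∫⁻ ω, p ω ∂μ + ∫⁻ ω, erealPos (-(F (G ω))) ∂μ ≤
      ∫⁻ ω, erealPos (F (G ω)) ∂μ + ∫⁻ ω, n ω ∂μ := by
    rw [← lintegral_add_left hpmΩ, ← lintegral_add_left hmFG]
    exact lintegral_mono_ae hpt
  have hpu : ∫⁻ ω, p ω ∂μ = ∫⁻ ω, erealPos (F (X ω)) ∂μ := by
    have h := hp univ MeasurableSet.univ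
    rwa [setLIntegral_univ, setLIntegral_univ] at h
  have hnu : ∫⁻ ω, n ω ∂μ = ∫⁻ ω, erealPos (-(F (X ω))) ∂μ := by
    have h := hn univ MeasurableSet.univ
    rwa [setLIntegral_univ, setLIntegral_univ] at h
  rw [hpu, hnu] at hint
  refine ereal_sub_le_sub hint ?_ ?_
  · rcases hdX with h | h
    · exact Or.inl h.ne
    · exact Or.inr h.ne
  · rcases hdG with h | h
    · exact Or.inl h.ne
    · exact Or.inr h.ne

end Core

/-- Rao–Blackwellization of compound e-variables: if `(E 1, …, E K)` is a compound e-variable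
for the nulls `Θ₀ 1, …, Θ₀ K` and, for each `j`, `S j` is sufficient for `Θ₀ j ∪ Θ₁` with
`G j := E[E j | S j]`, then `(G 1, …, G K)` is again a compound e-variable, and for any
concave utility `F` and `θ ∈ Θ₁ ∪ Θ₀ j`, `E_θ[F(G j)] ≥ E_θ[F(E j)]` when both sides are
defined. -/
theorem rao_blackwell_stmt10
    {Ω Θ : Type*} {mΩ : MeasurableSpace Ω} (P : Θ → Measure Ω)
    [∀ θ, IsProbabilityMeasure (P θ)]
    {K : ℕ} (Θ₀ : Fin K → Set Θ) (Θ₁ : Set Θ)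
    (E : Fin K → Ω → ℝ≥0∞) (hE : ∀ j, Measurable[mΩ] (E j))
    -- `(E j)` is a compound e-variable
    (hcomp : ∀ θ ∈ ⋃ j, Θ₀ j,
      (∑ k : Fin K, if θ ∈ Θ₀ k then ∫⁻ ω, E k ω ∂(P θ) else 0) ≤ (K : ℝ≥0∞))
    -- `m j = σ(S j)` is sufficient for `Θ₀ j ∪ Θ₁`, and `G j` is the universal
    -- conditional expectation of `E j` given `S j`
    (m : Fin K → MeasurableSpace Ω)
    (hsuf : ∀ j, IsSufficient (m j) P (Θ₀ j ∪ Θ₁))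
    (G : Fin K → Ω → ℝ≥0∞)
    (hG : ∀ j, IsUnivCondExpNN (m j) P (Θ₀ j ∪ Θ₁) (E j) (G j))
    (f : ℝ → ℝ) (F : ℝ≥0∞ → EReal) (hF : IsConcaveExtension f F) :
    (∀ θ ∈ ⋃ j, Θ₀ j,
      (∑ k : Fin K, if θ ∈ Θ₀ k then ∫⁻ ω, G k ω ∂(P θ) else 0) ≤ (K : ℝ≥0∞)) ∧
    (∀ j : Fin K, ∀ θ ∈ Θ₁ ∪ Θ₀ j,
      ExpDefined (P θ) (fun ω => F (E j ω)) → ExpDefined (P θ) (fun ω => F (G j ω)) →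
        eexp (P θ) (fun ω => F (E j ω)) ≤ eexp (P θ) (fun ω => F (G j ω))) := by
  constructor
  · intro θ hθ
    refine le_trans (le_of_eq ?_) (hcomp θ hθ)
    apply Finset.sum_congr rfl
    intro k _
    by_cases hk : θ ∈ Θ₀ k
    · rw [if_pos hk, if_pos hk]
      have h := ((hG k).2 θ (Or.inl hk)).2 univ MeasurableSet.univ
      rwa [setLIntegral_univ, setLIntegral_univ] at h
    · rw [if_neg hk, if_neg hk]
  · intro j θ hθ hdE hdG
    have hθ' : θ ∈ Θ₀ j ∪ Θ₁ := by
      rcases hθ with h | h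
      · exact Or.inr h
      · exact Or.inl h
    obtain ⟨hmj, hsufex⟩ := hsuf j
    have hmeasp : Measurable[mΩ] (fun ω => erealPos (F (E j ω))) :=
      measurable_erealPos.comp ((measurable_F hF).comp (hE j))
    have hmeasn : Measurable[mΩ] (fun ω => erealPos (-(F (E j ω)))) :=
      measurable_erealPos.comp (measurable_ereal_neg.comp ((measurable_F hF).comp (hE j)))
    obtain ⟨p, hpuniv⟩ := hsufex _ hmeasp
    obtain ⟨n, hnuniv⟩ := hsufex _ hmeasn
    exact main_ineq (P θ) (m j) (E j) (G j) p n hmj hF (hE j) (hG j).1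
      (hpuniv.2 θ hθ').1 (hnuniv.2 θ hθ').1 ((hG j).2 θ hθ').2
      (hpuniv.2 θ hθ').2 (hnuniv.2 θ hθ').2 hdE hdG
end
end

section
/- In the Bernoulli setting with E = exp(λX₁ − ψ(λ)) and G := e^{−ψ(λ)}(1 + (e^λ−1)S/n), n ≥ 2, for any strictly concave function f on (0,∞) and any p ∈ (0,1): E_p[f(G)] > E_p[f(E)]. In particular, strict improvement holds because P_p(0 < S < n) = 1 − pⁿ − (1−p)ⁿ > 0 and given S = k with 1 ≤ k ≤ n−1, X₁ is nondegenerate. -/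
open MeasureTheory ENNReal Filter Set
open scoped Classical
noncomputable section

/-- The law of `n` i.i.d. Bernoulli(p) observations, as a measure on `Fin n → Bool`
(for `p ∈ [0,1]`; the parameter is truncated to `[0,1]` so the definition is total). -/
def bernoulliPi (n : ℕ) (p : ℝ) : Measure (Fin n → Bool) :=
  Measure.pi fun _ => (PMF.bernoulli (min (Real.toNNReal p) 1) (min_le_right _ _)).toMeasure

/-- The first observation `X₁ ∈ {0,1}`. -/
def bernX1 (n : ℕ) (hn : 0 < n) (ω : Fin n → Bool) : ℝ := if ω ⟨0, hn⟩ then 1 else 0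

/-- The sufficient statistic `S = ∑ᵢ Xᵢ`. -/
def bernS (n : ℕ) (ω : Fin n → Bool) : ℝ := ∑ i : Fin n, if ω i then 1 else 0

lemma bern_single (p : ℝ) (hp : 0 ≤ p) (hp' : p ≤ 1) (b : Bool) :
    (((PMF.bernoulli (min (Real.toNNReal p) 1) (min_le_right _ _)).toMeasure) {b}).toReal
      = if b then p else 1 - p := by
  rw [PMF.toMeasure_apply_singleton _ b (measurableSet_singleton b)]
  have hle : Real.toNNReal p ≤ 1 := Real.toNNReal_le_one.2 hp'
  have hmin : min (Real.toNNReal p) 1 = Real.toNNReal p := min_eq_left hle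
  cases b
  · simp only [PMF.bernoulli_apply, Bool.cond_false, hmin]
    rw [ENNReal.coe_toReal, NNReal.coe_sub hle]
    simp [Real.coe_toNNReal _ hp]
  · simp [PMF.bernoulli_apply, hmin, Real.coe_toNNReal _ hp]

lemma bernoulliPi_singleton (n : ℕ) (p : ℝ) (hp : 0 ≤ p) (hp' : p ≤ 1) (ω : Fin n → Bool) :
    ((bernoulliPi n p) {ω}).toReal = ∏ i : Fin n, (if ω i then p else 1 - p) := by
  have h1 : (bernoulliPi n p) {ω}
      = ∏ i : Fin n, ((PMF.bernoulli (min (Real.toNNReal p) 1) (min_le_right _ _)).toMeasure {ω i}) := by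
    rw [← Set.univ_pi_singleton ω]
    exact Measure.pi_pi _ _
  rw [h1, ENNReal.toReal_prod]
  exact Finset.prod_congr rfl fun i _ => bern_single p hp hp' (ω i)

/-- In the Bernoulli setting with `E = exp(λ X₁ − ψ(λ))` and
`G = e^{−ψ(λ)}(1 + (e^λ − 1) S/n)`, `n ≥ 2`, for any strictly concave `f` on `(0,∞)`
and any `p ∈ (0,1)`: `E_p[f(G)] > E_p[f(E)]`. -/
theorem rao_blackwell_stmt12
    (n : ℕ) (hn2 : 2 ≤ n) (hn : 0 < n) (p₀ : ℝ) (hp₀ : 0 < p₀) (hp₀' : p₀ < 1)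
    (lam : ℝ) (hlam : 0 < lam)
    (ψ : ℝ) (hψ : ψ = Real.log (p₀ * Real.exp lam + 1 - p₀))
    (Efun : (Fin n → Bool) → ℝ)
    (hEfun : ∀ ω, Efun ω = Real.exp (lam * bernX1 n hn ω - ψ))
    (Gfun : (Fin n → Bool) → ℝ)
    (hGfun : ∀ ω, Gfun ω = Real.exp (-ψ) * (1 + (Real.exp lam - 1) * bernS n ω / n))
    (f : ℝ → ℝ) (hf : StrictConcaveOn ℝ (Set.Ioi 0) f)
    (p : ℝ) (hp : 0 < p) (hp' : p < 1) :
    (∫ ω, f (Efun ω) ∂(bernoulliPi n p)) < ∫ ω, f (Gfun ω) ∂(bernoulliPi n p) := by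
  classical
  haveI : IsProbabilityMeasure (bernoulliPi n p) := by unfold bernoulliPi; infer_instance
  have hq : (0:ℝ) < 1 - p := by linarith
  set i0 : Fin n := ⟨0, hn⟩ with hi0
  set a := Real.exp (-ψ) with ha
  set b := Real.exp (lam - ψ) with hb
  have hapos : 0 < a := Real.exp_pos _
  have hbpos : 0 < b := Real.exp_pos _
  have hab : a ≠ b := ne_of_lt (Real.exp_lt_exp.2 (by linarith))
  set w : (Fin n → Bool) → ℝ := fun ω => ∏ i : Fin n, (if ω i then p else 1 - p) with hw
  have hwpos : ∀ ω, 0 < w ω := fun ω =>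
    Finset.prod_pos fun i _ => by split <;> [exact hp; exact hq]
  have hμ : ∀ ω : Fin n → Bool, ((bernoulliPi n p) {ω}).toReal = w ω := fun ω =>
    bernoulliPi_singleton n p hp.le hp'.le ω
  have hnR : (0:ℝ) < n := by exact_mod_cast hn
  -- S bounds
  have hS0 : ∀ ω, 0 ≤ bernS n ω := fun ω =>
    Finset.sum_nonneg fun i _ => by split <;> norm_num
  have hSn : ∀ ω, bernS n ω ≤ n := fun ω => by
    calc bernS n ω ≤ ∑ _i : Fin n, (1:ℝ) :=
          Finset.sum_le_sum fun i _ => by split <;> norm_num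
      _ = n := by simp
  -- value descriptions
  have hE : ∀ ω, f (Efun ω) = bernX1 n hn ω * f b + (1 - bernX1 n hn ω) * f a := by
    intro ω
    rw [hEfun]
    unfold bernX1
    split <;> simp [ha, hb]
  have hG : ∀ ω, Gfun ω = (bernS n ω / n) * b + (1 - bernS n ω / n) * a := by
    intro ω
    rw [hGfun, ha, hb, Real.exp_sub]
    have : Real.exp ψ ≠ 0 := (Real.exp_pos _).ne'
    rw [Real.exp_neg]
    field_simp
    ring
  -- symmetry
  have hsym : ∀ j : Fin n, ∑ ω : Fin n → Bool, w ω * (if ω j then (1:ℝ) else 0)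
      = ∑ ω : Fin n → Bool, w ω * (if ω i0 then (1:ℝ) else 0) := by
    intro j
    apply Fintype.sum_equiv (Equiv.arrowCongr (Equiv.swap i0 j) (Equiv.refl Bool))
    intro ω
    have h1 : ∀ i, (Equiv.arrowCongr (Equiv.swap i0 j) (Equiv.refl Bool) ω) i
        = ω (Equiv.swap i0 j i) := by
      intro i; simp [Equiv.arrowCongr, Equiv.swap_apply_def]
    have h2 : w (Equiv.arrowCongr (Equiv.swap i0 j) (Equiv.refl Bool) ω) = w ω := by
      rw [hw]
      simp only [h1]
      exact Equiv.prod_comp (Equiv.swap i0 j) fun i => if ω i then p else 1 - p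
    rw [h2, h1, Equiv.swap_apply_left]
  have hkey : ∑ ω : Fin n → Bool, w ω * bernX1 n hn ω
      = ∑ ω : Fin n → Bool, w ω * (bernS n ω / n) := by
    have h1 : ∑ ω : Fin n → Bool, w ω * bernS n ω
        = (n:ℝ) * ∑ ω : Fin n → Bool, w ω * bernX1 n hn ω := by
      have e1 : ∀ ω : Fin n → Bool, w ω * bernS n ω
          = ∑ j : Fin n, w ω * (if ω j then (1:ℝ) else 0) := by
        intro ω; unfold bernS; rw [Finset.mul_sum]
      rw [Finset.sum_congr rfl fun ω _ => e1 ω, Finset.sum_comm,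
        Finset.sum_congr rfl fun j _ => hsym j, Finset.sum_const, Finset.card_univ,
        Fintype.card_fin, nsmul_eq_mul]
      rfl
    have h2 : ∑ ω : Fin n → Bool, w ω * (bernS n ω / n)
        = (∑ ω : Fin n → Bool, w ω * bernS n ω) / n := by
      rw [Finset.sum_div]
      exact Finset.sum_congr rfl fun ω _ => (mul_div_assoc _ _ _).symm
    rw [h2, h1]
    field_simp
  -- convert integrals to sums
  rw [integral_fintype (Integrable.of_finite), integral_fintype (Integrable.of_finite)]
  simp_rw [measureReal_def, hμ, smul_eq_mul]
  have hEq : ∑ ω : Fin n → Bool, w ω * f (Efun ω)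
      = ∑ ω : Fin n → Bool, w ω * ((bernS n ω / n) * f b + (1 - bernS n ω / n) * f a) := by
    simp_rw [hE]
    have e1 : ∀ (t wv : ℝ), wv * (t * f b + (1 - t) * f a) = wv * t * (f b - f a) + wv * f a := by
      intros; ring
    simp_rw [e1, Finset.sum_add_distrib, ← Finset.sum_mul]
    rw [hkey]
  rw [hEq]
  apply Finset.sum_lt_sum
  · intro ω _
    set t := bernS n ω / n with hts
    have ht0 : 0 ≤ t := div_nonneg (hS0 ω) hnR.le
    have ht1 : t ≤ 1 := by rw [hts, div_le_one hnR]; exact hSn ω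
    have hcc := hf.concaveOn.2 (Set.mem_Ioi.2 hbpos) (Set.mem_Ioi.2 hapos) ht0
      (by linarith : (0:ℝ) ≤ 1 - t) (by ring : t + (1 - t) = 1)
    rw [hG ω]
    simp only [smul_eq_mul] at hcc
    exact mul_le_mul_of_nonneg_left hcc (hwpos ω).le
  · refine ⟨fun i => decide (i = i0), Finset.mem_univ _, ?_⟩
    have hSω : bernS n (fun i => decide (i = i0)) = 1 := by
      unfold bernS
      simp only [decide_eq_true_eq]
      rw [Finset.sum_ite_eq' Finset.univ i0 (fun _ => (1:ℝ))]
      simp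
    set ω : Fin n → Bool := fun i => decide (i = i0) with hω
    have ht : bernS n ω / n = 1 / n := by rw [hSω]
    have ht0 : (0:ℝ) < 1 / n := by positivity
    have ht1 : (1:ℝ) / n < 1 := by
      rw [div_lt_one hnR]
      exact_mod_cast by omega
    have hcc := hf.2 (Set.mem_Ioi.2 hbpos) (Set.mem_Ioi.2 hapos) (Ne.symm hab) ht0
      (by linarith : (0:ℝ) < 1 - 1 / n) (by ring : 1 / (n:ℝ) + (1 - 1 / n) = 1)
    rw [hG ω, ht]
    simp only [smul_eq_mul] at hcc
    exact mul_lt_mul_of_pos_left hcc (hwpos ω)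
end
end

section
/- Let X ~ Pareto(m, α) with density α m^α / x^{α+1} on [m, ∞), and nα₁ > 1. If X ~ P_{W_u, nα₁} is the Bayes marginal of Pareto(m, nα₁) with m ~ Gamma(u, u), then E[X] = nα₁/(nα₁ − 1) (independent of u), and D_KL(P_{W_u, nα₁} ∥ P_{W_u, nα₀}) ≤ log(nα₁(nα₀+u)/(nα₀(nα₁+u))) + u·nα₁/(nα₁−1); consequently D_KL(P_{W_u, nα₁} ∥ P_{W_u, nα₀}) → 0 as u ↓ 0. -/
open MeasureTheory ENNReal Filter Set
open scoped Classical
noncomputable section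

/-- The Bayes marginal of the Pareto(m, α) model with prior `Gamma(u, u)` on the scale `m`:
the measure on `ℝ` with Lebesgue density
`f_{W_u, α}(x) = ∫₀ˣ (α m^α / x^(α+1)) · gammaPDF(u, u)(m) dm`. -/
def paretoBayes (α u : ℝ) : Measure ℝ :=
  volume.withDensity fun x => ENNReal.ofReal
    (∫ m in Set.Ioc (0 : ℝ) x,
      (α * m ^ α / x ^ (α + 1)) * ProbabilityTheory.gammaPDFReal u u m)

namespace RB15
open ProbabilityTheory Real

variable {a b u p x : ℝ}

/-- The Lebesgue density of `paretoBayes a u`. -/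
def F (a u x : ℝ) : ℝ :=
  ∫ m in Set.Ioc (0 : ℝ) x, (a * m ^ a / x ^ (a + 1)) * gammaPDFReal u u m

lemma paretoBayes_eq (a u : ℝ) :
    paretoBayes a u = volume.withDensity fun x => ENNReal.ofReal (F a u x) := rfl

lemma F_of_nonpos (hx : x ≤ 0) : F a u x = 0 := by
  unfold F
  rw [Set.Ioc_eq_empty (not_lt.2 hx), Measure.restrict_empty, integral_zero_measure]

lemma measurable_ker (a u : ℝ) :
    Measurable fun q : ℝ × ℝ => (a * q.2 ^ a / q.1 ^ (a + 1)) * gammaPDFReal u u q.2 :=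
  (((measurable_const.mul (measurable_snd.pow measurable_const)).div
      (measurable_fst.pow measurable_const)).mul
    ((measurable_gammaPDFReal u u).comp measurable_snd))

lemma measurableSet_region : MeasurableSet {q : ℝ × ℝ | 0 < q.2 ∧ q.2 ≤ q.1} :=
  (measurableSet_lt measurable_const measurable_snd).inter
    (measurableSet_le measurable_snd measurable_fst)

lemma F_eq_indicator_integral (a u x : ℝ) :
    F a u x = ∫ m, ({q : ℝ × ℝ | 0 < q.2 ∧ q.2 ≤ q.1}.indicator
      (fun q => (a * q.2 ^ a / q.1 ^ (a + 1)) * gammaPDFReal u u q.2)) (x, m) := by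
  rw [F, ← integral_indicator measurableSet_Ioc]
  refine integral_congr_ae (ae_of_all _ fun m => ?_)
  simp only [Set.indicator_apply, Set.mem_Ioc, Set.mem_setOf_eq]

lemma measurable_F (a u : ℝ) : Measurable (F a u) := by
  have : F a u = fun x => ∫ m, ({q : ℝ × ℝ | 0 < q.2 ∧ q.2 ≤ q.1}.indicator
      (fun q => (a * q.2 ^ a / q.1 ^ (a + 1)) * gammaPDFReal u u q.2)) (x, m) :=
    funext (F_eq_indicator_integral a u)
  rw [this]
  exact (StronglyMeasurable.integral_prod_right'
    (((measurable_ker a u).indicator measurableSet_region).stronglyMeasurable)).measurable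

lemma F_nonneg (ha : 0 < a) (hu : 0 < u) : 0 ≤ F a u x := by
  rcases le_or_gt x 0 with hx | hx
  · rw [F_of_nonpos hx]
  · refine setIntegral_nonneg measurableSet_Ioc fun m hm => ?_
    exact mul_nonneg (div_nonneg (mul_nonneg ha.le (Real.rpow_nonneg hm.1.le a))
      (Real.rpow_nonneg hx.le _)) (gammaPDFReal_nonneg hu hu m)

lemma integrable_gamma (hu : 0 < u) : Integrable (gammaPDFReal u u) := by
  refine ⟨(measurable_gammaPDFReal u u).aestronglyMeasurable, ?_⟩
  rw [hasFiniteIntegral_iff_ofReal (ae_of_all _ (gammaPDFReal_nonneg hu hu))]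
  have : ∫⁻ a, ENNReal.ofReal (gammaPDFReal u u a) = 1 := lintegral_gammaPDF_eq_one hu hu
  rw [this]
  exact one_lt_top

lemma integrableOn_rpow_mul_gamma (hu : 0 < u) (hc : 0 ≤ a) (hx : 0 < x) :
    IntegrableOn (fun m => m ^ a * gammaPDFReal u u m) (Set.Ioc 0 x) := by
  refine Integrable.mono' (((integrable_gamma hu).integrableOn).const_mul (x ^ a))
    ((measurable_id.pow measurable_const).mul
      (measurable_gammaPDFReal u u)).aestronglyMeasurable.restrict ?_
  filter_upwards [ae_restrict_mem measurableSet_Ioc] with m hm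
  rw [Real.norm_eq_abs, abs_of_nonneg (mul_nonneg (Real.rpow_nonneg hm.1.le a)
    (gammaPDFReal_nonneg hu hu m))]
  exact mul_le_mul_of_nonneg_right (Real.rpow_le_rpow hm.1.le hm.2 hc)
    (gammaPDFReal_nonneg hu hu m)

lemma key (ha : 0 < a) (hu : 0 < u) (hp0 : 0 ≤ p) (hpa : p < a)
    (hmom : ∫⁻ m in Set.Ioi (0:ℝ), ENNReal.ofReal (m ^ p * gammaPDFReal u u m) = 1) :
    ∫⁻ x in Set.Ioi (0:ℝ), ENNReal.ofReal (x ^ p) * ENNReal.ofReal (F a u x)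
      = ENNReal.ofReal (a / (a - p)) := by
  set G : ℝ → ℝ → ℝ≥0∞ := fun x m =>
    if 0 < m ∧ m ≤ x then ENNReal.ofReal (x ^ p)
      * ENNReal.ofReal ((a * m ^ a / x ^ (a + 1)) * gammaPDFReal u u m) else 0 with hG
  have hGmeas : Measurable (Function.uncurry G) := by
    have huncurry : Function.uncurry G = fun q : ℝ × ℝ =>
        Set.indicator {q : ℝ × ℝ | 0 < q.2 ∧ q.2 ≤ q.1}
          (fun q => ENNReal.ofReal (q.1 ^ p) *
            ENNReal.ofReal ((a * q.2 ^ a / q.1 ^ (a + 1)) * gammaPDFReal u u q.2)) q := by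
      funext q
      simp only [Function.uncurry, hG, Set.indicator_apply, Set.mem_setOf_eq]
    rw [huncurry]
    exact Measurable.indicator
      (((measurable_fst.pow measurable_const).ennreal_ofReal).mul
        ((measurable_ker a u).ennreal_ofReal)) measurableSet_region
  have stepA : ∀ x : ℝ, 0 < x → ENNReal.ofReal (x ^ p) * ENNReal.ofReal (F a u x)
      = ∫⁻ m, G x m := by
    intro x hx
    have hint : IntegrableOn (fun m => (a * m ^ a / x ^ (a + 1)) * gammaPDFReal u u m)
        (Set.Ioc 0 x) :=
      ((integrableOn_rpow_mul_gamma hu ha.le hx).const_mul (a / x ^ (a + 1))).congr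
        (ae_of_all _ fun m => by ring)
    have hnn : 0 ≤ᵐ[volume.restrict (Set.Ioc 0 x)]
        fun m => (a * m ^ a / x ^ (a + 1)) * gammaPDFReal u u m := by
      filter_upwards [ae_restrict_mem measurableSet_Ioc] with m hm
      exact mul_nonneg (div_nonneg (mul_nonneg ha.le (Real.rpow_nonneg hm.1.le a))
        (Real.rpow_nonneg hx.le _)) (gammaPDFReal_nonneg hu hu m)
    rw [F, ofReal_integral_eq_lintegral_ofReal hint hnn, ← lintegral_indicator measurableSet_Ioc,
      ← lintegral_const_mul' _ _ ofReal_ne_top]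
    exact lintegral_congr fun m => by
      simp only [hG, Set.indicator_apply, Set.mem_Ioc, mul_ite, mul_zero]
  have hL : ∫⁻ x in Set.Ioi (0:ℝ), ENNReal.ofReal (x ^ p) * ENNReal.ofReal (F a u x)
      = ∫⁻ x, ∫⁻ m, G x m := by
    rw [← lintegral_indicator measurableSet_Ioi]
    refine lintegral_congr fun x => ?_
    by_cases hx : 0 < x
    · rw [Set.indicator_of_mem (Set.mem_Ioi.2 hx), stepA x hx]
    · rw [Set.indicator_of_notMem (by simpa using hx)]
      have hzero : ∀ m, G x m = 0 := fun m => by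
        simp only [hG]
        rw [if_neg (fun hc => hx (lt_of_lt_of_le hc.1 hc.2))]
      simp only [hzero, lintegral_zero]
  rw [hL, lintegral_lintegral_swap hGmeas.aemeasurable]
  have inner : ∀ m : ℝ, (∫⁻ x, G x m)
      = Set.indicator (Set.Ioi (0:ℝ)) (fun m => ENNReal.ofReal (a / (a - p))
        * ENNReal.ofReal (m ^ p * gammaPDFReal u u m)) m := by
    intro m
    by_cases hm : 0 < m
    · rw [Set.indicator_of_mem (Set.mem_Ioi.2 hm)]
      have hC : 0 ≤ a * m ^ a * gammaPDFReal u u m :=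
        mul_nonneg (mul_nonneg ha.le (Real.rpow_nonneg hm.le a)) (gammaPDFReal_nonneg hu hu m)
      have hGx : ∀ x, G x m = Set.indicator (Set.Ici m)
          (fun x => ENNReal.ofReal (a * m ^ a * gammaPDFReal u u m)
            * ENNReal.ofReal (x ^ (p - (a + 1)))) x := by
        intro x
        by_cases hxm : m ≤ x
        · have hx0 : 0 < x := lt_of_lt_of_le hm hxm
          simp only [hG]
          rw [if_pos ⟨hm, hxm⟩, Set.indicator_of_mem (Set.mem_Ici.2 hxm),
            ← ENNReal.ofReal_mul (Real.rpow_nonneg hx0.le p), ← ENNReal.ofReal_mul hC]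
          congr 1
          rw [Real.rpow_sub hx0]
          field_simp
        · simp only [hG]
          rw [if_neg (fun hc => hxm hc.2), Set.indicator_of_notMem (by simpa using hxm)]
      have hrpow : ∫⁻ x in Set.Ioi m, ENNReal.ofReal (x ^ (p - (a + 1)))
          = ENNReal.ofReal (m ^ (p - a) / (a - p)) := by
        rw [← ofReal_integral_eq_lintegral_ofReal
          (integrableOn_Ioi_rpow_of_lt (by linarith) hm)
          (by filter_upwards [ae_restrict_mem measurableSet_Ioi] with x hx;
              exact Real.rpow_nonneg (le_of_lt (hm.trans hx)) _),
          integral_Ioi_rpow_of_lt (by linarith) hm]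
        congr 1
        rw [show p - (a + 1) + 1 = p - a by ring, neg_div, ← div_neg, neg_sub]
      calc (∫⁻ x, G x m) = ∫⁻ x in Set.Ici m, ENNReal.ofReal (a * m ^ a * gammaPDFReal u u m)
            * ENNReal.ofReal (x ^ (p - (a + 1))) := by
            rw [← lintegral_indicator measurableSet_Ici]
            exact lintegral_congr hGx
        _ = ENNReal.ofReal (a * m ^ a * gammaPDFReal u u m)
            * ∫⁻ x in Set.Ioi m, ENNReal.ofReal (x ^ (p - (a + 1))) := by
            rw [Measure.restrict_congr_set Ioi_ae_eq_Ici.symm,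
              lintegral_const_mul' _ _ ofReal_ne_top]
        _ = ENNReal.ofReal (a / (a - p)) * ENNReal.ofReal (m ^ p * gammaPDFReal u u m) := by
            rw [hrpow, ← ENNReal.ofReal_mul hC, ← ENNReal.ofReal_mul (div_nonneg ha.le (by linarith))]
            congr 1
            have hmm : m ^ a * m ^ (p - a) = m ^ p := by
              rw [← Real.rpow_add hm]; ring_nf
            rw [← hmm]
            field_simp
    · rw [Set.indicator_of_notMem (by simpa using hm)]
      have hzero : ∀ x, G x m = 0 := fun x => by
        simp only [hG]
        rw [if_neg (fun hc => hm hc.1)]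
      simp only [hzero, lintegral_zero]
  rw [lintegral_congr inner, lintegral_indicator measurableSet_Ioi,
    lintegral_const_mul' _ _ ofReal_ne_top, hmom, mul_one]

lemma lint_gamma_Ioi {v : ℝ} (hv : 0 < v) (hu : 0 < u) :
    ∫⁻ m in Set.Ioi (0:ℝ), ENNReal.ofReal (gammaPDFReal v u m) = 1 := by
  have h1 := lintegral_gammaPDF_eq_one hv hu
  have h2 : ∫⁻ m in Set.Iic (0:ℝ), gammaPDF v u m = 0 := by
    rw [Measure.restrict_congr_set Iio_ae_eq_Iic.symm]
    exact lintegral_gammaPDF_of_nonpos le_rfl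
  have h3 := lintegral_add_compl (μ := volume) (gammaPDF v u) (measurableSet_Ioi (a := (0:ℝ)))
  rw [compl_Ioi, h2, add_zero, h1] at h3
  show ∫⁻ m in Set.Ioi (0:ℝ), gammaPDF v u m = 1
  exact h3

lemma mom_zero (hu : 0 < u) :
    ∫⁻ m in Set.Ioi (0:ℝ), ENNReal.ofReal (m ^ (0:ℝ) * gammaPDFReal u u m) = 1 := by
  simpa [Real.rpow_zero] using lint_gamma_Ioi hu hu

lemma mom_one (hu : 0 < u) :
    ∫⁻ m in Set.Ioi (0:ℝ), ENNReal.ofReal (m ^ (1:ℝ) * gammaPDFReal u u m) = 1 := by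
  have hpt : ∀ m ∈ Set.Ioi (0:ℝ), ENNReal.ofReal (m ^ (1:ℝ) * gammaPDFReal u u m)
      = ENNReal.ofReal (gammaPDFReal (u + 1) u m) := by
    intro m hm
    have hm0 : (0:ℝ) < m := hm
    congr 1
    unfold gammaPDFReal
    rw [if_pos hm0.le, if_pos hm0.le, Real.rpow_one,
      show u + 1 - 1 = u by ring, Real.Gamma_add_one hu.ne', Real.rpow_add_one hu.ne',
      mul_comm (u ^ u) u, mul_div_mul_left _ _ hu.ne']
    have e1 : m ^ u = m ^ (u - 1) * m := by
      rw [← Real.rpow_add_one hm0.ne']; ring_nf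
    rw [e1]; ring
  rw [setLIntegral_congr_fun measurableSet_Ioi hpt]
  exact lint_gamma_Ioi (by linarith) hu

lemma lint_pos_part (ha : 1 < a) (hu : 0 < u) :
    ∫⁻ x, ENNReal.ofReal x ∂(paretoBayes a u) = ENNReal.ofReal (a / (a - 1)) := by
  rw [paretoBayes_eq, lintegral_withDensity_eq_lintegral_mul _
    ((measurable_F a u).ennreal_ofReal) measurable_ofReal,
    ← key (by linarith : (0:ℝ) < a) hu zero_le_one ha (mom_one hu),
    ← lintegral_indicator measurableSet_Ioi]
  refine lintegral_congr fun x => ?_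
  simp only [Pi.mul_apply]
  by_cases hx : 0 < x
  · rw [Set.indicator_of_mem (Set.mem_Ioi.2 hx), Real.rpow_one, mul_comm]
  · rw [Set.indicator_of_notMem (by simpa using hx), F_of_nonpos (not_lt.1 hx),
      ENNReal.ofReal_zero, zero_mul]

lemma lint_neg_part (hu : 0 < u) :
    ∫⁻ x, ENNReal.ofReal (-x) ∂(paretoBayes a u) = 0 := by
  rw [paretoBayes_eq, lintegral_withDensity_eq_lintegral_mul _
    ((measurable_F a u).ennreal_ofReal) (measurable_neg.ennreal_ofReal)]
  refine (lintegral_congr fun x => ?_).trans lintegral_zero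
  simp only [Pi.mul_apply]
  by_cases hx : 0 < x
  · rw [ENNReal.ofReal_of_nonpos (show -x ≤ 0 by linarith), mul_zero]
  · rw [F_of_nonpos (not_lt.1 hx), ENNReal.ofReal_zero, zero_mul]

lemma isProb (ha : 0 < a) (hu : 0 < u) : IsProbabilityMeasure (paretoBayes a u) := by
  constructor
  rw [paretoBayes_eq, withDensity_apply _ MeasurableSet.univ, Measure.restrict_univ]
  have hkey := key ha hu le_rfl ha (mom_zero hu)
  rw [sub_zero, div_self ha.ne', ENNReal.ofReal_one, ← lintegral_indicator measurableSet_Ioi]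
    at hkey
  rw [← hkey]
  refine lintegral_congr fun x => ?_
  by_cases hx : 0 < x
  · rw [Set.indicator_of_mem (Set.mem_Ioi.2 hx), Real.rpow_zero, ENNReal.ofReal_one, one_mul]
  · rw [Set.indicator_of_notMem (by simpa using hx), F_of_nonpos (not_lt.1 hx),
      ENNReal.ofReal_zero]

lemma integrable_id' (ha : 1 < a) (hu : 0 < u) :
    Integrable (fun x : ℝ => x) (paretoBayes a u) := by
  refine ⟨measurable_id.aestronglyMeasurable, ?_⟩
  have hb : ∀ x : ℝ, (‖x‖₊ : ℝ≥0∞) ≤ ENNReal.ofReal x + ENNReal.ofReal (-x) := by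
    intro x
    rw [← enorm_eq_nnnorm, Real.enorm_eq_ofReal_abs]
    rcases le_total 0 x with hx | hx
    · rw [abs_of_nonneg hx]; exact le_add_right le_rfl
    · rw [abs_of_nonpos hx]; exact le_add_left le_rfl
  calc (∫⁻ x, (‖x‖₊ : ℝ≥0∞) ∂(paretoBayes a u))
      ≤ ∫⁻ x, (ENNReal.ofReal x + ENNReal.ofReal (-x)) ∂(paretoBayes a u) := lintegral_mono hb
    _ = ENNReal.ofReal (a / (a - 1)) + 0 := by
        rw [lintegral_add_left measurable_ofReal, lint_pos_part ha hu, lint_neg_part hu]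
    _ < ⊤ := by simp

lemma integral_id' (ha : 1 < a) (hu : 0 < u) :
    ∫ x, x ∂(paretoBayes a u) = a / (a - 1) := by
  rw [integral_eq_lintegral_pos_part_sub_lintegral_neg_part (integrable_id' ha hu)]
  simp only [lint_pos_part ha hu, lint_neg_part hu]
  rw [ENNReal.toReal_ofReal (div_nonneg (by linarith) (by linarith))]
  simp

lemma F_decomp (ha : 0 < a) (hu : 0 < u) (hx : 0 < x) :
    F a u x = (a * (u ^ u / Real.Gamma u) / x ^ (a + 1)) *
      ∫ m in Set.Ioc (0:ℝ) x, m ^ (a + u - 1) * Real.exp (-(u * m)) := by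
  rw [F, ← integral_const_mul]
  refine setIntegral_congr_fun measurableSet_Ioc fun m hm => ?_
  unfold gammaPDFReal
  rw [if_pos hm.1.le]
  have e1 : m ^ (a + u - 1) = m ^ a * m ^ (u - 1) := by
    rw [← Real.rpow_add hm.1]; ring_nf
  rw [e1]; ring

lemma integrableOn_rpow_Ioc (h : -1 < a) (hx : 0 < x) :
    IntegrableOn (fun m : ℝ => m ^ a) (Set.Ioc 0 x) :=
  (intervalIntegral.intervalIntegrable_rpow' (a := 0) (b := x) h).1

lemma integral_rpow_Ioc (h : -1 < a) (hx : 0 < x) :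
    ∫ m in Set.Ioc (0:ℝ) x, m ^ a = x ^ (a + 1) / (a + 1) := by
  rw [← intervalIntegral.integral_of_le hx.le, integral_rpow (Or.inl h),
    Real.zero_rpow (by linarith : a + 1 ≠ 0), sub_zero]

lemma integrableOn_rpow_exp (hau : -1 < a) (hu : 0 < u) (hx : 0 < x) :
    IntegrableOn (fun m : ℝ => m ^ a * Real.exp (-(u * m))) (Set.Ioc 0 x) := by
  refine Integrable.mono' (integrableOn_rpow_Ioc hau hx)
    ((measurable_id.pow measurable_const).mul
      ((measurable_const.mul measurable_id).neg.exp)).aestronglyMeasurable.restrict ?_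
  filter_upwards [ae_restrict_mem measurableSet_Ioc] with m hm
  rw [Real.norm_eq_abs, abs_of_nonneg (mul_nonneg (Real.rpow_nonneg hm.1.le a)
    (Real.exp_pos _).le)]
  nth_rewrite 2 [← mul_one (m ^ a)]
  exact mul_le_mul_of_nonneg_left (Real.exp_le_one_iff.2 (by nlinarith [hm.1, hu]))
    (Real.rpow_nonneg hm.1.le _)

lemma J_le (hau : 0 < a + u) (hu : 0 < u) (hx : 0 < x) :
    ∫ m in Set.Ioc (0:ℝ) x, m ^ (a + u - 1) * Real.exp (-(u * m))
      ≤ x ^ (a + u) / (a + u) := by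
  have h1 : (-1:ℝ) < a + u - 1 := by linarith
  have hval : ∫ m in Set.Ioc (0:ℝ) x, m ^ (a + u - 1) = x ^ (a + u) / (a + u) := by
    rw [integral_rpow_Ioc h1 hx, show a + u - 1 + 1 = a + u by ring]
  rw [← hval]
  refine setIntegral_mono_on (integrableOn_rpow_exp h1 hu hx)
    (integrableOn_rpow_Ioc h1 hx) measurableSet_Ioc fun m hm => ?_
  nth_rewrite 2 [← mul_one (m ^ (a + u - 1))]
  exact mul_le_mul_of_nonneg_left (Real.exp_le_one_iff.2 (by nlinarith [hm.1, hu]))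
    (Real.rpow_nonneg hm.1.le _)

lemma le_J (hau : 0 < a + u) (hu : 0 < u) (hx : 0 < x) :
    Real.exp (-(u * x)) * (x ^ (a + u) / (a + u))
      ≤ ∫ m in Set.Ioc (0:ℝ) x, m ^ (a + u - 1) * Real.exp (-(u * m)) := by
  have h1 : (-1:ℝ) < a + u - 1 := by linarith
  have hval : ∫ m in Set.Ioc (0:ℝ) x, m ^ (a + u - 1) = x ^ (a + u) / (a + u) := by
    rw [integral_rpow_Ioc h1 hx, show a + u - 1 + 1 = a + u by ring]
  rw [← hval, ← integral_const_mul]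
  refine setIntegral_mono_on ((integrableOn_rpow_Ioc h1 hx).const_mul _)
    (integrableOn_rpow_exp h1 hu hx) measurableSet_Ioc fun m hm => ?_
  rw [mul_comm]
  refine mul_le_mul_of_nonneg_left (Real.exp_le_exp.2 ?_) (Real.rpow_nonneg hm.1.le _)
  have := mul_le_mul_of_nonneg_left hm.2 hu.le
  linarith

lemma F_le (ha : 0 < a) (hu : 0 < u) (hx : 0 < x) :
    F a u x ≤ a * (u ^ u / Real.Gamma u) * x ^ (u - 1) / (a + u) := by
  have hΓ : 0 < Real.Gamma u := Real.Gamma_pos_of_pos hu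
  have hC : 0 ≤ a * (u ^ u / Real.Gamma u) / x ^ (a + 1) := by positivity
  have hau : 0 < a + u := by linarith
  rw [F_decomp ha hu hx]
  calc (a * (u ^ u / Real.Gamma u) / x ^ (a + 1)) *
        ∫ m in Set.Ioc (0:ℝ) x, m ^ (a + u - 1) * Real.exp (-(u * m))
      ≤ (a * (u ^ u / Real.Gamma u) / x ^ (a + 1)) * (x ^ (a + u) / (a + u)) :=
        mul_le_mul_of_nonneg_left (J_le hau hu hx) hC
    _ = a * (u ^ u / Real.Gamma u) * x ^ (u - 1) / (a + u) := by
        rw [show (u - 1 : ℝ) = a + u - (a + 1) by ring, Real.rpow_sub hx]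
        have hxp : x ^ (a + 1) ≠ 0 := (Real.rpow_pos_of_pos hx _).ne'
        field_simp
        try ring

lemma le_F (ha : 0 < a) (hu : 0 < u) (hx : 0 < x) :
    a * (u ^ u / Real.Gamma u) * x ^ (u - 1) / (a + u) * Real.exp (-(u * x)) ≤ F a u x := by
  have hΓ : 0 < Real.Gamma u := Real.Gamma_pos_of_pos hu
  have hC : 0 ≤ a * (u ^ u / Real.Gamma u) / x ^ (a + 1) := by positivity
  have hau : 0 < a + u := by linarith
  rw [F_decomp ha hu hx]
  calc a * (u ^ u / Real.Gamma u) * x ^ (u - 1) / (a + u) * Real.exp (-(u * x))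
      = (a * (u ^ u / Real.Gamma u) / x ^ (a + 1)) *
        (Real.exp (-(u * x)) * (x ^ (a + u) / (a + u))) := by
        rw [show (u - 1 : ℝ) = a + u - (a + 1) by ring, Real.rpow_sub hx]
        have hxp : x ^ (a + 1) ≠ 0 := (Real.rpow_pos_of_pos hx _).ne'
        field_simp
        try ring
    _ ≤ _ := mul_le_mul_of_nonneg_left (le_J hau hu hx) hC

lemma F_pos (ha : 0 < a) (hu : 0 < u) (hx : 0 < x) : 0 < F a u x := by
  refine lt_of_lt_of_le ?_ (le_F ha hu hx)
  have h1 : 0 < u ^ u / Real.Gamma u := by positivity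
  positivity

lemma ratio_ub (ha : 0 < a) (hb : 0 < b) (hu : 0 < u) (hx : 0 < x) :
    F a u x ≤ (a * (b + u) / (b * (a + u))) * Real.exp (u * x) * F b u x := by
  have hΓ : 0 < Real.Gamma u := Real.Gamma_pos_of_pos hu
  calc F a u x ≤ a * (u ^ u / Real.Gamma u) * x ^ (u - 1) / (a + u) := F_le ha hu hx
    _ = (a * (b + u) / (b * (a + u))) * Real.exp (u * x) *
        (b * (u ^ u / Real.Gamma u) * x ^ (u - 1) / (b + u) * Real.exp (-(u * x))) := by
        rw [Real.exp_neg]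
        have h1 : Real.exp (u * x) ≠ 0 := Real.exp_ne_zero _
        field_simp
        try ring
    _ ≤ _ := mul_le_mul_of_nonneg_left (le_F hb hu hx) (by positivity)

lemma ratio_lb (ha : 0 < a) (hb : 0 < b) (hu : 0 < u) (hx : 0 < x) :
    (a * (b + u) / (b * (a + u))) * Real.exp (-(u * x)) * F b u x ≤ F a u x := by
  have hΓ : 0 < Real.Gamma u := Real.Gamma_pos_of_pos hu
  calc (a * (b + u) / (b * (a + u))) * Real.exp (-(u * x)) * F b u x
      ≤ (a * (b + u) / (b * (a + u))) * Real.exp (-(u * x)) *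
        (b * (u ^ u / Real.Gamma u) * x ^ (u - 1) / (b + u)) :=
        mul_le_mul_of_nonneg_left (F_le hb hu hx) (by positivity)
    _ = a * (u ^ u / Real.Gamma u) * x ^ (u - 1) / (a + u) * Real.exp (-(u * x)) := by
        field_simp
        try ring
    _ ≤ F a u x := le_F ha hu hx

lemma log_ratio_le (ha : 0 < a) (hb : 0 < b) (hu : 0 < u) (hx : 0 < x) :
    Real.log (F a u x / F b u x) ≤ Real.log (a * (b + u) / (b * (a + u))) + u * x := by
  have hFa := F_pos ha hu hx
  have hFb := F_pos hb hu hx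
  have hK : 0 < a * (b + u) / (b * (a + u)) := by positivity
  have h2 : F a u x / F b u x ≤ (a * (b + u) / (b * (a + u))) * Real.exp (u * x) :=
    (div_le_iff₀ hFb).2 (ratio_ub ha hb hu hx)
  calc Real.log (F a u x / F b u x)
      ≤ Real.log ((a * (b + u) / (b * (a + u))) * Real.exp (u * x)) :=
        Real.log_le_log (div_pos hFa hFb) h2
    _ = _ := by rw [Real.log_mul hK.ne' (Real.exp_ne_zero _), Real.log_exp]

lemma le_log_ratio (ha : 0 < a) (hb : 0 < b) (hu : 0 < u) (hx : 0 < x) :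
    Real.log (a * (b + u) / (b * (a + u))) - u * x ≤ Real.log (F a u x / F b u x) := by
  have hFa := F_pos ha hu hx
  have hFb := F_pos hb hu hx
  have hK : 0 < a * (b + u) / (b * (a + u)) := by positivity
  have h2 : (a * (b + u) / (b * (a + u))) * Real.exp (-(u * x)) ≤ F a u x / F b u x :=
    (le_div_iff₀ hFb).2 (ratio_lb ha hb hu hx)
  calc Real.log (a * (b + u) / (b * (a + u))) - u * x
      = Real.log ((a * (b + u) / (b * (a + u))) * Real.exp (-(u * x))) := by
        rw [Real.log_mul hK.ne' (Real.exp_ne_zero _), Real.log_exp]; ring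
    _ ≤ _ := Real.log_le_log (by positivity) h2

lemma mu_ae_pos (a u : ℝ) : ∀ᵐ x ∂(paretoBayes a u), 0 < x := by
  rw [ae_iff]
  have hset : {x : ℝ | ¬0 < x} = Set.Iic 0 := by ext x; simp
  rw [hset, paretoBayes_eq, withDensity_apply _ measurableSet_Iic,
    setLIntegral_congr_fun (g := fun _ => (0:ℝ≥0∞)) measurableSet_Iic
      (fun x (hx : x ≤ 0) => by rw [F_of_nonpos hx, ENNReal.ofReal_zero]),
    lintegral_zero]

lemma eexp_congr {Ω : Type*} {mΩ : MeasurableSpace Ω} {μ : Measure Ω} {f g : Ω → EReal}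
    (h : f =ᵐ[μ] g) : eexp μ f = eexp μ g := by
  unfold eexp
  congr 1
  · exact congrArg _ (lintegral_congr_ae (h.mono fun ω hω => by simp [hω]))
  · exact congrArg _ (lintegral_congr_ae (h.mono fun ω hω => by simp [hω]))

lemma eexp_coe_integrable {Ω : Type*} {mΩ : MeasurableSpace Ω} {μ : Measure Ω} {f : Ω → ℝ}
    (hf : Integrable f μ) :
    eexp μ (fun ω => ((f ω : ℝ) : EReal)) = ((∫ ω, f ω ∂μ : ℝ) : EReal) := by
  have h1 : ∀ ω : Ω, erealPos ((f ω : ℝ) : EReal) = ENNReal.ofReal (f ω) := by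
    intro ω; unfold erealPos
    rw [if_neg (EReal.coe_ne_top _), EReal.toReal_coe]
  have h2 : ∀ ω : Ω, erealPos (-((f ω : ℝ) : EReal)) = ENNReal.ofReal (-(f ω)) := by
    intro ω; unfold erealPos
    rw [← EReal.coe_neg, if_neg (EReal.coe_ne_top _), EReal.toReal_coe]
  have hbound : ∀ g : Ω → ℝ, (∀ ω, g ω ≤ |f ω|) →
      (∫⁻ ω, ENNReal.ofReal (g ω) ∂μ) ≠ ⊤ := by
    intro g hg
    refine ne_of_lt (lt_of_le_of_lt (lintegral_mono fun ω => ?_) hf.2)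
    rw [Real.enorm_eq_ofReal_abs]
    exact ENNReal.ofReal_le_ofReal (hg ω)
  have hfin1 := hbound f (fun ω => le_abs_self _)
  have hfin2 := hbound (fun ω => -(f ω)) (fun ω => neg_le_abs _)
  have hcoe : ∀ A : ℝ≥0∞, A ≠ ⊤ → ((A.toReal : ℝ) : EReal) = (A : EReal) := by
    intro A hA
    rw [← EReal.toReal_coe_ennreal,
      EReal.coe_toReal (by simpa [EReal.coe_ennreal_eq_top_iff] using hA)
        (EReal.coe_ennreal_ne_bot _)]
  unfold eexp
  simp_rw [h1, h2]
  rw [integral_eq_lintegral_pos_part_sub_lintegral_neg_part hf, EReal.coe_sub,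
    hcoe _ hfin1, hcoe _ hfin2]

lemma integrable_logRatio (ha : 1 < a) (hb : 0 < b) (hu : 0 < u) :
    Integrable (fun x => Real.log (F a u x / F b u x)) (paretoBayes a u) := by
  have ha0 : 0 < a := by linarith
  have := isProb ha0 hu
  refine Integrable.mono'
    (g := fun x => |Real.log (a * (b + u) / (b * (a + u)))| + u * x)
    ((integrable_const _).add ((integrable_id' ha hu).const_mul u))
    (((measurable_F a u).div (measurable_F b u)).log).aestronglyMeasurable ?_
  filter_upwards [mu_ae_pos a u] with x hx
  rw [Real.norm_eq_abs, abs_le]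
  have hux : 0 < u * x := mul_pos hu hx
  constructor
  · have h1 := le_log_ratio ha0 hb hu hx
    have h2 := neg_abs_le (Real.log (a * (b + u) / (b * (a + u))))
    linarith
  · have h1 := log_ratio_le ha0 hb hu hx
    have h2 := le_abs_self (Real.log (a * (b + u) / (b * (a + u))))
    linarith

lemma klDiv_eq (ha : 1 < a) (hb : 0 < b) (hu : 0 < u) :
    klDiv' (paretoBayes a u) (paretoBayes b u)
      = ((∫ x, Real.log (F a u x / F b u x) ∂(paretoBayes a u) : ℝ) : EReal) := by
  have ha0 : 0 < a := by linarith
  have hrep : paretoBayes a u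
      = (paretoBayes b u).withDensity (fun x => ENNReal.ofReal (F a u x / F b u x)) := by
    have hm' : Measurable fun x => ENNReal.ofReal (F a u x / F b u x) :=
      ((measurable_F a u).div (measurable_F b u)).ennreal_ofReal
    rw [paretoBayes_eq a, paretoBayes_eq b,
      ← withDensity_mul _ ((measurable_F b u).ennreal_ofReal)
        hm']
    congr 1
    funext x
    simp only [Pi.mul_apply]
    by_cases hx : 0 < x
    · have hFb := F_pos hb hu hx
      rw [← ENNReal.ofReal_mul (F_nonneg hb hu)]
      congr 1
      rw [mul_comm, div_mul_cancel₀ _ hFb.ne']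
    · simp [F_of_nonpos (not_lt.1 hx)]
  have hsig : SigmaFinite (paretoBayes b u) := by
    rw [paretoBayes_eq]; infer_instance
  have hac : paretoBayes a u ≪ paretoBayes b u := by
    rw [hrep]; exact withDensity_absolutelyContinuous _ _
  have hmeas : Measurable fun x => ENNReal.ofReal (F a u x / F b u x) :=
    ((measurable_F a u).div (measurable_F b u)).ennreal_ofReal
  have hrn : (paretoBayes a u).rnDeriv (paretoBayes b u)
      =ᵐ[paretoBayes a u] fun x => ENNReal.ofReal (F a u x / F b u x) := by
    refine hac.ae_eq ?_
    have h := Measure.rnDeriv_withDensity (paretoBayes b u) hmeas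
    rw [← hrep] at h
    exact h
  rw [klDiv', if_pos hac]
  have helog : (fun x => elog ((paretoBayes a u).rnDeriv (paretoBayes b u) x))
      =ᵐ[paretoBayes a u] fun x => ((Real.log (F a u x / F b u x) : ℝ) : EReal) := by
    filter_upwards [hrn, mu_ae_pos a u] with x hx hxpos
    rw [hx]
    have hr : 0 < F a u x / F b u x := div_pos (F_pos ha0 hu hxpos) (F_pos hb hu hxpos)
    unfold elog
    rw [if_neg (by simp [ENNReal.ofReal_eq_zero, not_le, hr]), if_neg ofReal_ne_top,
      ENNReal.toReal_ofReal hr.le]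
  rw [eexp_congr helog, eexp_coe_integrable (integrable_logRatio ha hb hu)]

lemma klDiv_bounds (ha : 1 < a) (hb : 0 < b) (hu : 0 < u) :
    ((Real.log (a * (b + u) / (b * (a + u))) - u * a / (a - 1) : ℝ) : EReal)
        ≤ klDiv' (paretoBayes a u) (paretoBayes b u) ∧
      klDiv' (paretoBayes a u) (paretoBayes b u)
        ≤ ((Real.log (a * (b + u) / (b * (a + u))) + u * a / (a - 1) : ℝ) : EReal) := by
  have ha0 : 0 < a := by linarith
  have := isProb ha0 hu
  have hIL := integrable_logRatio ha hb hu
  have hIid := (integrable_id' ha hu).const_mul u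
  have hK : ∫ x, Real.log (a * (b + u) / (b * (a + u)))
      ∂(paretoBayes a u) = Real.log (a * (b + u) / (b * (a + u))) := by
    simp [integral_const]
  have huid : ∫ x, u * x ∂(paretoBayes a u) = u * a / (a - 1) := by
    rw [integral_const_mul, integral_id' ha hu]
    ring
  have hub : ∫ x, Real.log (F a u x / F b u x) ∂(paretoBayes a u)
      ≤ Real.log (a * (b + u) / (b * (a + u))) + u * a / (a - 1) := by
    have h1 : ∫ x, Real.log (F a u x / F b u x) ∂(paretoBayes a u)
        ≤ ∫ x, (Real.log (a * (b + u) / (b * (a + u))) + u * x) ∂(paretoBayes a u) := by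
      refine integral_mono_ae hIL ((integrable_const _).add hIid) ?_
      filter_upwards [mu_ae_pos a u] with x hx
      exact log_ratio_le ha0 hb hu hx
    rwa [integral_add (integrable_const _) hIid, hK, huid] at h1
  have hlb : Real.log (a * (b + u) / (b * (a + u))) - u * a / (a - 1)
      ≤ ∫ x, Real.log (F a u x / F b u x) ∂(paretoBayes a u) := by
    have h1 : ∫ x, (Real.log (a * (b + u) / (b * (a + u))) - u * x) ∂(paretoBayes a u)
        ≤ ∫ x, Real.log (F a u x / F b u x) ∂(paretoBayes a u) := by
      refine integral_mono_ae ((integrable_const _).sub hIid) hIL ?_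
      filter_upwards [mu_ae_pos a u] with x hx
      exact le_log_ratio ha0 hb hu hx
    rwa [integral_sub (integrable_const _) hIid, hK, huid] at h1
  rw [klDiv_eq ha hb hu]
  exact ⟨EReal.coe_le_coe_iff.2 hlb, EReal.coe_le_coe_iff.2 hub⟩

end RB15

/-- Pareto example: for `n α₁ > 1` and the Gamma(u,u) prior on the scale, the Bayes marginal
`P_{W_u, nα₁}` has mean `nα₁/(nα₁ − 1)` (independently of `u`); moreover
`D_KL(P_{W_u, nα₁} ∥ P_{W_u, nα₀}) ≤ log(nα₁(nα₀+u)/(nα₀(nα₁+u))) + u·nα₁/(nα₁−1)`,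
and consequently the divergence tends to `0` as `u ↓ 0`. -/
theorem rao_blackwell_stmt15
    (n : ℕ) (α₀ α₁ : ℝ) (hα₀ : 0 < α₀) (hα₁ : 0 < α₁) (h1 : 1 < (n : ℝ) * α₁) :
    (∀ u : ℝ, 0 < u →
      ∫ x, x ∂(paretoBayes ((n : ℝ) * α₁) u) = (n : ℝ) * α₁ / ((n : ℝ) * α₁ - 1)) ∧
    (∀ u : ℝ, 0 < u →
      klDiv' (paretoBayes ((n : ℝ) * α₁) u) (paretoBayes ((n : ℝ) * α₀) u) ≤
        ((Real.log (((n : ℝ) * α₁ * ((n : ℝ) * α₀ + u)) / ((n : ℝ) * α₀ * ((n : ℝ) * α₁ + u)))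
          + u * ((n : ℝ) * α₁) / ((n : ℝ) * α₁ - 1) : ℝ) : EReal)) ∧
    Tendsto (fun u : ℝ => klDiv' (paretoBayes ((n : ℝ) * α₁) u) (paretoBayes ((n : ℝ) * α₀) u))
      (nhdsWithin 0 (Set.Ioi 0)) (nhds (0 : EReal)) := by
  have hn : (0:ℝ) < (n:ℝ) := by
    rcases Nat.eq_zero_or_pos n with h | h
    · subst h; simp at h1; linarith
    · exact_mod_cast h
  have hb : 0 < (n:ℝ) * α₀ := mul_pos hn hα₀
  refine ⟨fun u hu => RB15.integral_id' h1 hu, fun u hu => (RB15.klDiv_bounds h1 hb hu).2, ?_⟩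
  set a := (n:ℝ) * α₁ with ha_def
  set b := (n:ℝ) * α₀ with hb_def
  have ha0 : 0 < a := by linarith
  have habne : b * (a + 0) ≠ 0 := (mul_pos hb (by linarith)).ne'
  have hval : a * (b + 0) / (b * (a + 0)) = 1 := by
    rw [add_zero, add_zero, mul_comm b a, div_self (mul_pos ha0 hb).ne']
  have hφ : ContinuousAt (fun u : ℝ => Real.log (a * (b + u) / (b * (a + u)))) 0 := by
    have hca : ContinuousAt (fun u : ℝ => a * (b + u) / (b * (a + u))) 0 :=
      ContinuousAt.div
        ((continuous_const.mul (continuous_const.add continuous_id)).continuousAt)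
        ((continuous_const.mul (continuous_const.add continuous_id)).continuousAt) habne
    exact (Real.continuousAt_log (by rw [hval]; norm_num)).comp hca
  have hφ0 : Real.log (a * (b + 0) / (b * (a + 0))) = 0 := by
    rw [hval, Real.log_one]
  have hlin : ContinuousAt (fun u : ℝ => u * a / (a - 1)) 0 :=
    ((continuous_id.mul continuous_const).div_const _).continuousAt
  have hup : Tendsto (fun u : ℝ => Real.log (a * (b + u) / (b * (a + u))) + u * a / (a - 1))
      (nhds 0) (nhds 0) := by
    have h : ContinuousAt
        (fun u : ℝ => Real.log (a * (b + u) / (b * (a + u))) + u * a / (a - 1)) 0 := hφ.add hlin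
    have h0 : Real.log (a * b / (b * a)) = 0 := by
      rw [mul_comm b a, div_self (mul_pos ha0 hb).ne', Real.log_one]
    simpa [h0] using h.tendsto
  have hdn : Tendsto (fun u : ℝ => Real.log (a * (b + u) / (b * (a + u))) - u * a / (a - 1))
      (nhds 0) (nhds 0) := by
    have h : ContinuousAt
        (fun u : ℝ => Real.log (a * (b + u) / (b * (a + u))) - u * a / (a - 1)) 0 := hφ.sub hlin
    have h0 : Real.log (a * b / (b * a)) = 0 := by
      rw [mul_comm b a, div_self (mul_pos ha0 hb).ne', Real.log_one]
    simpa [h0] using h.tendsto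
  have hcoe : Tendsto (fun x : ℝ => (x : EReal)) (nhds 0) (nhds (0 : EReal)) := by
    simpa using (continuous_coe_real_ereal.continuousAt (x := (0:ℝ))).tendsto
  refine tendsto_of_tendsto_of_tendsto_of_le_of_le'
    (hcoe.comp (tendsto_nhdsWithin_of_tendsto_nhds hdn))
    (hcoe.comp (tendsto_nhdsWithin_of_tendsto_nhds hup)) ?_ ?_
  · filter_upwards [self_mem_nhdsWithin] with u hu
    exact (RB15.klDiv_bounds h1 hb hu).1
  · filter_upwards [self_mem_nhdsWithin] with u hu
    exact (RB15.klDiv_bounds h1 hb hu).2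
end
end
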